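/- arXiv:2011.07266 — 3 statements merged into one kernel-verified Lean document; each statement's English description precedes it below -/
import Mathlib

section
/- Let X be a random variable taking values in the positive integers with P(X > x) ~ c·x^{-β} as x → ∞ for some constants c > 0 and β > 0, and let Y be a nonnegative random variable (possibly dependent on X). Suppose there exist m, z > 0 and C < ∞ with m ≠ β/z such that for all n ≥ 1 and all λ ≥ 1, P(Y ≥ λ·n^z | X = n) ≤ C·λ^{-m}. Then there exists a constant C' < ∞ (depending on m, z, β, c, C) such that P(Y ≥ k) ≤ C'·k^{-(min(β/z, m))} for all k ≥ 1. -/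
open MeasureTheory ProbabilityTheory Filter Real

open Finset in
lemma aux_mvt (r : ℝ) (a : ℝ) (ha : 1 ≤ a) :
    ∃ ξ, a < ξ ∧ ξ < a + 1 ∧ (a + 1) ^ r - a ^ r = r * ξ ^ (r - 1) := by
  have hab : a < a + 1 := by linarith
  have hc : ContinuousOn (fun x : ℝ => x ^ r) (Set.Icc a (a + 1)) := by
    intro x hx
    have hx0 : x ≠ 0 := by have := hx.1; intro h; rw [h] at this; linarith
    exact (Real.continuousAt_rpow_const x r (Or.inl hx0)).continuousWithinAt
  obtain ⟨ξ, hξ, he⟩ := exists_hasDerivAt_eq_slope (fun x : ℝ => x ^ r)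
    (fun x => r * x ^ (r - 1)) hab hc (fun x hx =>
      Real.hasDerivAt_rpow_const (Or.inl (by have := hx.1; intro h; rw [h] at this; linarith)))
  refine ⟨ξ, hξ.1, hξ.2, ?_⟩
  rw [show a + 1 - a = (1:ℝ) by ring, div_one] at he
  exact he.symm

lemma aux_sum_lt (q : ℝ) (hq : q < -1) :
    ∃ Z : ℝ, 0 ≤ Z ∧ ∀ N : ℕ, ∑ j ∈ Finset.Ico 2 N, (j : ℝ) ^ q ≤ Z := by
  have hs : Summable (fun n : ℕ => (n : ℝ) ^ q) := Real.summable_nat_rpow.mpr hq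
  exact ⟨∑' n : ℕ, (n : ℝ) ^ q,
    tsum_nonneg fun n => Real.rpow_nonneg (Nat.cast_nonneg n) q,
    fun N => Summable.sum_le_tsum _ (fun i _ => Real.rpow_nonneg (Nat.cast_nonneg i) q) hs⟩

open Finset in
lemma aux_sum_gt (q : ℝ) (hq : -1 < q) :
    ∃ D : ℝ, 0 ≤ D ∧ ∀ N : ℕ, ∑ j ∈ Finset.Ico 2 N, (j : ℝ) ^ q ≤ D * (N : ℝ) ^ (q + 1) := by
  have hq1 : 0 < q + 1 := by linarith
  set B : ℝ := max 1 ((2:ℝ) ^ q) / (q + 1) with hBdef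
  have hB : 0 ≤ B := div_nonneg (le_trans zero_le_one (le_max_left _ _)) hq1.le
  refine ⟨B, hB, fun N => ?_⟩
  rcases le_or_gt N 2 with hN | hN
  · rw [Finset.Ico_eq_empty (by omega)]
    simp only [Finset.sum_empty]
    positivity
  · have step : ∀ j ∈ Finset.Ico 2 N, (j : ℝ) ^ q ≤
        B * ((j : ℝ) ^ (q + 1) - ((j : ℝ) - 1) ^ (q + 1)) := by
      intro j hj
      have hj2 : 2 ≤ j := (Finset.mem_Ico.mp hj).1
      have hj2R : (2:ℝ) ≤ (j:ℝ) := by exact_mod_cast hj2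
      obtain ⟨ξ, hξ1, hξ2, he⟩ := aux_mvt (q + 1) ((j:ℝ) - 1) (by linarith)
      rw [show (j:ℝ) - 1 + 1 = (j:ℝ) by ring] at hξ2 he
      have hξpos : 0 < ξ := by linarith
      have key : (j:ℝ) ^ q ≤ max 1 ((2:ℝ) ^ q) * ξ ^ q := by
        rcases le_or_gt 0 q with h0 | h0
        · have h1 : ((j:ℝ) / 2) ^ q ≤ ξ ^ q :=
            Real.rpow_le_rpow (by positivity) (by linarith) h0
          have h2 : ((j:ℝ) / 2) ^ q = (j:ℝ) ^ q / 2 ^ q :=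
            Real.div_rpow (by positivity) (by norm_num) q
          rw [h2] at h1
          calc (j:ℝ) ^ q = ((j:ℝ) ^ q / 2 ^ q) * 2 ^ q := by
                field_simp
            _ ≤ ξ ^ q * 2 ^ q := by
                apply mul_le_mul_of_nonneg_right h1 (by positivity)
            _ ≤ max 1 ((2:ℝ) ^ q) * ξ ^ q := by
                rw [mul_comm]
                exact mul_le_mul_of_nonneg_right (le_max_right _ _) (by positivity)
        · have h1 : (j:ℝ) ^ q ≤ ξ ^ q :=
            Real.rpow_le_rpow_of_nonpos hξpos (le_of_lt hξ2) h0.le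
          calc (j:ℝ) ^ q ≤ ξ ^ q := h1
            _ ≤ max 1 ((2:ℝ) ^ q) * ξ ^ q := by
                nlinarith [Real.rpow_nonneg hξpos.le q, le_max_left (1:ℝ) ((2:ℝ) ^ q)]
      calc (j:ℝ) ^ q ≤ max 1 ((2:ℝ) ^ q) * ξ ^ q := key
        _ = B * ((q + 1) * ξ ^ q) := by rw [hBdef]; field_simp
        _ = B * ((j : ℝ) ^ (q + 1) - ((j : ℝ) - 1) ^ (q + 1)) := by
            rw [show q + 1 - 1 = q by ring] at he; rw [← he]
    calc ∑ j ∈ Finset.Ico 2 N, (j : ℝ) ^ q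
        ≤ ∑ j ∈ Finset.Ico 2 N, B * ((j : ℝ) ^ (q + 1) - ((j : ℝ) - 1) ^ (q + 1)) :=
          Finset.sum_le_sum step
      _ = B * ∑ j ∈ Finset.Ico 2 N, ((j : ℝ) ^ (q + 1) - ((j : ℝ) - 1) ^ (q + 1)) :=
          (Finset.mul_sum _ _ _).symm
      _ ≤ B * (N : ℝ) ^ (q + 1) := by
          apply mul_le_mul_of_nonneg_left _ hB
          have htel : ∑ j ∈ Finset.Ico 2 N, ((j : ℝ) ^ (q + 1) - ((j : ℝ) - 1) ^ (q + 1))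
              = (((N - 2 : ℕ) : ℝ) + 1) ^ (q + 1) - 1 := by
            rw [Finset.sum_Ico_eq_sum_range]
            have : ∀ i : ℕ, ((2 + i : ℕ) : ℝ) ^ (q + 1) - (((2 + i : ℕ) : ℝ) - 1) ^ (q + 1)
                = (fun t : ℕ => ((t : ℝ) + 1) ^ (q + 1)) (i + 1)
                  - (fun t : ℕ => ((t : ℝ) + 1) ^ (q + 1)) i := by
              intro i; simp only; push_cast; ring_nf
            calc ∑ i ∈ Finset.range (N - 2),
                  (((2 + i : ℕ) : ℝ) ^ (q + 1) - (((2 + i : ℕ) : ℝ) - 1) ^ (q + 1))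
                = ∑ i ∈ Finset.range (N - 2),
                  ((fun t : ℕ => ((t : ℝ) + 1) ^ (q + 1)) (i + 1)
                    - (fun t : ℕ => ((t : ℝ) + 1) ^ (q + 1)) i) :=
                  Finset.sum_congr rfl (fun i _ => this i)
              _ = (((N - 2 : ℕ) : ℝ) + 1) ^ (q + 1) - (((0:ℕ) : ℝ) + 1) ^ (q + 1) :=
                  by exact Finset.sum_range_sub (fun t : ℕ => ((t : ℝ) + 1) ^ (q + 1)) (N - 2)
              _ = (((N - 2 : ℕ) : ℝ) + 1) ^ (q + 1) - 1 := by norm_num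
          rw [htel]
          have h1 : (((N - 2 : ℕ) : ℝ) + 1) ≤ (N : ℝ) := by
            have : (N - 2 : ℕ) + 1 ≤ N := by omega
            exact_mod_cast this
          have h2 : (((N - 2 : ℕ) : ℝ) + 1) ^ (q + 1) ≤ (N : ℝ) ^ (q + 1) :=
            Real.rpow_le_rpow (by positivity) h1 hq1.le
          linarith

open Finset in
lemma aux_abel (p β K : ℝ) (hp : 0 < p) (hβ : 0 < β) (hK : 0 ≤ K)
    (a : ℕ → ℝ) (ha : ∀ n, 0 ≤ a n)
    (htot : ∀ N : ℕ, ∑ n ∈ Finset.Ico 1 N, a n ≤ 1)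
    (htail : ∀ j N : ℕ, 2 ≤ j → ∑ n ∈ Finset.Ico j N, a n ≤ K * ((j : ℝ) - 1) ^ (-β)) :
    ∀ N : ℕ, ∑ n ∈ Finset.Ico 1 N, (n : ℝ) ^ p * a n ≤
      1 + 2 * p * K * 2 ^ β * ∑ j ∈ Finset.Ico 2 N, (j : ℝ) ^ (p - 1 - β) := by
  intro N
  have hGnn : 0 ≤ ∑ j ∈ Finset.Ico 2 N, (j : ℝ) ^ (p - 1 - β) :=
    Finset.sum_nonneg fun j _ => Real.rpow_nonneg (Nat.cast_nonneg j) _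
  have hcoef : 0 ≤ 2 * p * K * 2 ^ β := by positivity
  rcases le_or_gt N 1 with hN | hN
  · rw [Finset.Ico_eq_empty (by omega)]
    simp only [Finset.sum_empty]
    nlinarith
  set d : ℕ → ℝ := fun j => (j : ℝ) ^ p - ((j : ℝ) - 1) ^ p with hd
  have hd0 : ∀ j : ℕ, 1 ≤ j → 0 ≤ d j := by
    intro j hj
    have hj1 : (1 : ℝ) ≤ (j : ℝ) := by exact_mod_cast hj
    have : ((j : ℝ) - 1) ^ p ≤ (j : ℝ) ^ p :=
      Real.rpow_le_rpow (by linarith) (by linarith) hp.le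
    simp only [hd]; linarith
  have htel : ∀ n : ℕ, ∑ j ∈ Finset.Ico 1 (n + 1), d j = (n : ℝ) ^ p := by
    intro n
    rw [Finset.sum_Ico_eq_sum_range]
    have hsummand : ∀ i : ℕ, d (1 + i) =
        (fun t : ℕ => (t : ℝ) ^ p) (i + 1) - (fun t : ℕ => (t : ℝ) ^ p) i := by
      intro i; simp only [hd]; push_cast; ring_nf
    calc ∑ i ∈ Finset.range (n + 1 - 1), d (1 + i)
        = ∑ i ∈ Finset.range n,
          ((fun t : ℕ => (t : ℝ) ^ p) (i + 1) - (fun t : ℕ => (t : ℝ) ^ p) i) := by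
          rw [show n + 1 - 1 = n from rfl]
          exact Finset.sum_congr rfl fun i _ => hsummand i
      _ = ((n : ℕ) : ℝ) ^ p - ((0 : ℕ) : ℝ) ^ p :=
          by exact Finset.sum_range_sub (fun t : ℕ => (t : ℝ) ^ p) n
      _ = (n : ℝ) ^ p := by
          rw [Nat.cast_zero, Real.zero_rpow hp.ne']; ring
  have hswap : ∑ n ∈ Finset.Ico 1 N, (n : ℝ) ^ p * a n
      = ∑ j ∈ Finset.Ico 1 N, d j * ∑ n ∈ Finset.Ico j N, a n := by
    calc ∑ n ∈ Finset.Ico 1 N, (n : ℝ) ^ p * a n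
        = ∑ n ∈ Finset.Ico 1 N, ∑ j ∈ Finset.Ico 1 (n + 1), d j * a n := by
          refine Finset.sum_congr rfl fun n _ => ?_
          rw [← Finset.sum_mul, htel n]
      _ = ∑ j ∈ Finset.Ico 1 N, ∑ n ∈ Finset.Ico j N, d j * a n :=
          (Finset.sum_Ico_Ico_comm 1 N fun j n => d j * a n).symm
      _ = ∑ j ∈ Finset.Ico 1 N, d j * ∑ n ∈ Finset.Ico j N, a n := by
          exact Finset.sum_congr rfl fun j _ => (Finset.mul_sum _ _ _).symm
  rw [hswap]
  rw [Finset.sum_eq_sum_Ico_succ_bot hN (fun j => d j * ∑ n ∈ Finset.Ico j N, a n)]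
  have hfirst : d 1 * ∑ n ∈ Finset.Ico 1 N, a n ≤ 1 := by
    have hd1 : d 1 = 1 := by
      simp only [hd]; norm_num [Real.zero_rpow hp.ne']
    rw [hd1, one_mul]; exact htot N
  have hrest : ∑ j ∈ Finset.Ico (1 + 1) N, d j * ∑ n ∈ Finset.Ico j N, a n ≤
      2 * p * K * 2 ^ β * ∑ j ∈ Finset.Ico 2 N, (j : ℝ) ^ (p - 1 - β) := by
    rw [Finset.mul_sum]
    apply Finset.sum_le_sum
    intro j hj
    have hj2 : 2 ≤ j := (Finset.mem_Ico.mp hj).1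
    have hj2R : (2 : ℝ) ≤ (j : ℝ) := by exact_mod_cast hj2
    have hjpos : (0 : ℝ) < (j : ℝ) := by linarith
    -- bound d j ≤ 2 * p * j^(p-1)
    obtain ⟨ξ, hξ1, hξ2, he⟩ := aux_mvt p ((j : ℝ) - 1) (by linarith)
    rw [show (j : ℝ) - 1 + 1 = (j : ℝ) by ring] at hξ2 he
    have hξpos : 0 < ξ := by linarith
    have hdj : d j ≤ 2 * p * (j : ℝ) ^ (p - 1) := by
      have hdje : d j = p * ξ ^ (p - 1) := he
      rcases le_or_gt 1 p with h1p | h1p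
      · have : ξ ^ (p - 1) ≤ (j : ℝ) ^ (p - 1) :=
          Real.rpow_le_rpow hξpos.le hξ2.le (by linarith)
        have hjp : 0 ≤ (j : ℝ) ^ (p - 1) := Real.rpow_nonneg hjpos.le _
        nlinarith
      · have h1 : ξ ^ (p - 1) ≤ ((j : ℝ) / 2) ^ (p - 1) :=
          Real.rpow_le_rpow_of_nonpos (by positivity) (by linarith) (by linarith)
        have h2 : ((j : ℝ) / 2) ^ (p - 1) = (j : ℝ) ^ (p - 1) / 2 ^ (p - 1) :=
          Real.div_rpow hjpos.le (by norm_num) _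
        have h3 : (j : ℝ) ^ (p - 1) / 2 ^ (p - 1) = (j : ℝ) ^ (p - 1) * 2 ^ (1 - p) := by
          rw [div_eq_mul_inv, ← Real.rpow_neg (by norm_num : (0:ℝ) ≤ 2), neg_sub]
        have h4 : (2 : ℝ) ^ (1 - p) ≤ 2 := by
          calc (2 : ℝ) ^ (1 - p) ≤ 2 ^ (1 : ℝ) :=
                Real.rpow_le_rpow_of_exponent_le one_le_two (by linarith)
            _ = 2 := Real.rpow_one 2
        have hjp : 0 ≤ (j : ℝ) ^ (p - 1) := Real.rpow_nonneg hjpos.le _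
        have h5 : ξ ^ (p - 1) ≤ (j : ℝ) ^ (p - 1) * 2 := by
          calc ξ ^ (p - 1) ≤ (j : ℝ) ^ (p - 1) * 2 ^ (1 - p) := by rw [← h3, ← h2]; exact h1
            _ ≤ (j : ℝ) ^ (p - 1) * 2 := mul_le_mul_of_nonneg_left h4 hjp
        nlinarith
    -- bound tail
    have htail' : ∑ n ∈ Finset.Ico j N, a n ≤ K * (2 ^ β * (j : ℝ) ^ (-β)) := by
      refine (htail j N hj2).trans ?_
      have h1 : ((j : ℝ) - 1) ^ (-β) ≤ ((j : ℝ) / 2) ^ (-β) :=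
        Real.rpow_le_rpow_of_nonpos (by positivity) (by linarith) (by linarith)
      have h2 : ((j : ℝ) / 2) ^ (-β) = (j : ℝ) ^ (-β) / 2 ^ (-β) :=
        Real.div_rpow hjpos.le (by norm_num) _
      have h3 : (j : ℝ) ^ (-β) / 2 ^ (-β) = 2 ^ β * (j : ℝ) ^ (-β) := by
        rw [div_eq_mul_inv, ← Real.rpow_neg (by norm_num : (0:ℝ) ≤ 2), neg_neg]; ring
      have := h1.trans_eq (h2.trans h3)
      exact mul_le_mul_of_nonneg_left this hK
    have hdnn : 0 ≤ d j := hd0 j (by omega)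
    have hsann : 0 ≤ ∑ n ∈ Finset.Ico j N, a n := Finset.sum_nonneg fun n _ => ha n
    calc d j * ∑ n ∈ Finset.Ico j N, a n
        ≤ (2 * p * (j : ℝ) ^ (p - 1)) * (K * (2 ^ β * (j : ℝ) ^ (-β))) := by
          apply mul_le_mul hdj htail' hsann (by positivity)
      _ = 2 * p * K * 2 ^ β * ((j : ℝ) ^ (p - 1) * (j : ℝ) ^ (-β)) := by ring
      _ = 2 * p * K * 2 ^ β * (j : ℝ) ^ (p - 1 - β) := by
          rw [← Real.rpow_add hjpos, show p - 1 + -β = p - 1 - β by ring]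
  linarith [hfirst, hrest]

theorem stmt_0
    {Ω : Type*} [MeasureSpace Ω] [IsProbabilityMeasure (ℙ : Measure Ω)]
    (X : Ω → ℕ) (Y : Ω → ℝ) (hXmeas : Measurable X) (hYmeas : Measurable Y)
    (hXpos : ∀ ω, 1 ≤ X ω) (hYnn : ∀ ω, 0 ≤ Y ω)
    (c β : ℝ) (hc : 0 < c) (hβ : 0 < β)
    (htail : Tendsto (fun x : ℕ => (ℙ {ω | x < X ω}).toReal / (c * (x : ℝ) ^ (-β)))
      atTop (nhds 1))
    (m z C : ℝ) (hm : 0 < m) (hz : 0 < z) (hmz : m ≠ β / z)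
    (hcond : ∀ n : ℕ, 1 ≤ n → ∀ lam : ℝ, 1 ≤ lam →
      ((ℙ[|{ω | X ω = n}]) {ω | lam * (n : ℝ) ^ z ≤ Y ω}).toReal ≤ C * lam ^ (-m)) :
    ∃ C' : ℝ, ∀ k : ℝ, 1 ≤ k →
      (ℙ {ω | k ≤ Y ω}).toReal ≤ C' * k ^ (-(min (β / z) m)) := by
  -- C is nonnegative
  have hC0 : 0 ≤ C := by
    have := hcond 1 le_rfl 1 le_rfl
    have h0 : (0:ℝ) ≤ ((ℙ[|{ω | X ω = 1}]) {ω | 1 * ((1:ℕ) : ℝ) ^ z ≤ Y ω}).toReal :=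
      ENNReal.toReal_nonneg
    rw [Real.one_rpow] at this
    linarith
  -- extract tail constant K
  obtain ⟨N0, hN0⟩ : ∃ N0 : ℕ, ∀ n : ℕ, N0 ≤ n →
      (ℙ {ω | n < X ω}).toReal / (c * (n : ℝ) ^ (-β)) ≤ 2 := by
    have := htail.eventually (eventually_le_nhds (by norm_num : (1:ℝ) < 2))
    exact eventually_atTop.mp this
  set M : ℕ := max N0 1 with hM
  set K : ℝ := max 1 (max (2 * c) ((M : ℝ) ^ β)) with hKdef
  have hK1 : (1:ℝ) ≤ K := le_max_left _ _
  have hK0 : (0:ℝ) ≤ K := by linarith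
  have hKbound : ∀ n : ℕ, 1 ≤ n → (ℙ {ω | n < X ω}).toReal ≤ K * (n : ℝ) ^ (-β) := by
    intro n hn
    have hnR : (1:ℝ) ≤ (n:ℝ) := by exact_mod_cast hn
    have hnpos : (0:ℝ) < (n:ℝ) := by linarith
    have hrp : (0:ℝ) < (n:ℝ) ^ (-β) := Real.rpow_pos_of_pos hnpos _
    rcases le_or_gt M n with hMn | hMn
    · have h2 := hN0 n (le_trans (le_max_left _ _) hMn)
      have hden : (0:ℝ) < c * (n:ℝ) ^ (-β) := by positivity
      rw [div_le_iff₀ hden] at h2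
      calc (ℙ {ω | n < X ω}).toReal ≤ 2 * (c * (n:ℝ) ^ (-β)) := h2
        _ = (2 * c) * (n:ℝ) ^ (-β) := by ring
        _ ≤ K * (n:ℝ) ^ (-β) := by
            apply mul_le_mul_of_nonneg_right _ hrp.le
            exact le_trans (le_max_left _ _) (le_max_right _ _)
    · have hle1 : (ℙ {ω | n < X ω}).toReal ≤ 1 :=
        ENNReal.toReal_mono ENNReal.one_ne_top prob_le_one
      have hMpos : (0:ℝ) < (M:ℝ) := by
        have : 1 ≤ M := le_max_right _ _
        exact_mod_cast Nat.lt_of_lt_of_le Nat.zero_lt_one this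
      have hnM : (n:ℝ) ≤ (M:ℝ) := by exact_mod_cast hMn.le
      have h1 : (M:ℝ) ^ (-β) ≤ (n:ℝ) ^ (-β) :=
        Real.rpow_le_rpow_of_nonpos hnpos hnM (by linarith)
      have h2 : (1:ℝ) = (M:ℝ) ^ β * (M:ℝ) ^ (-β) := by
        rw [← Real.rpow_add hMpos]; norm_num
      calc (ℙ {ω | n < X ω}).toReal ≤ 1 := hle1
        _ = (M:ℝ) ^ β * (M:ℝ) ^ (-β) := h2
        _ ≤ (M:ℝ) ^ β * (n:ℝ) ^ (-β) := by
            apply mul_le_mul_of_nonneg_left h1 (Real.rpow_nonneg hMpos.le _)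
        _ ≤ K * (n:ℝ) ^ (-β) := by
            apply mul_le_mul_of_nonneg_right _ hrp.le
            exact le_trans (le_max_right _ _) (le_max_right _ _)
  -- the point masses
  set Sn : ℕ → Set Ω := fun n => {ω | X ω = n} with hSn
  have hSnmeas : ∀ n, MeasurableSet (Sn n) := fun n => hXmeas (measurableSet_singleton n)
  set a : ℕ → ℝ := fun n => (ℙ (Sn n)).toReal with ha
  have hann : ∀ n, 0 ≤ a n := fun n => ENNReal.toReal_nonneg
  -- partial sums of a bounded by tails
  have hsum_tail : ∀ j N : ℕ, 1 ≤ j →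
      ∑ n ∈ Finset.Ico j N, a n ≤ (ℙ {ω | (j - 1 : ℕ) < X ω}).toReal := by
    intro j N hj
    have hdisj : Set.PairwiseDisjoint (↑(Finset.Ico j N)) Sn := by
      intro i _ l _ hil
      simp only [Function.onFun, hSn]
      apply Set.disjoint_left.mpr
      intro ω h1 h2
      exact hil (h1.symm.trans h2)
    have hU : (⋃ n ∈ Finset.Ico j N, Sn n) ⊆ {ω | (j - 1 : ℕ) < X ω} := by
      intro ω hω
      obtain ⟨n, hn, hωn⟩ := Set.mem_iUnion₂.mp hω
      have : j ≤ n := (Finset.mem_Ico.mp hn).1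
      have : j - 1 < n := by omega
      simpa [hSn, hωn] using lt_of_lt_of_le this (le_of_eq hωn.symm) |>.trans_le le_rfl
    have hEq : ∑ n ∈ Finset.Ico j N, ℙ (Sn n) = ℙ (⋃ n ∈ Finset.Ico j N, Sn n) :=
      (measure_biUnion_finset hdisj fun n _ => hSnmeas n).symm
    have : ∑ n ∈ Finset.Ico j N, ℙ (Sn n) ≤ ℙ {ω | (j - 1 : ℕ) < X ω} :=
      hEq.le.trans (measure_mono hU)
    calc ∑ n ∈ Finset.Ico j N, a n
        = (∑ n ∈ Finset.Ico j N, ℙ (Sn n)).toReal :=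
          (ENNReal.toReal_sum fun n _ => measure_ne_top _ _).symm
      _ ≤ (ℙ {ω | (j - 1 : ℕ) < X ω}).toReal :=
          ENNReal.toReal_mono (measure_ne_top _ _) this
  have htot : ∀ N : ℕ, ∑ n ∈ Finset.Ico 1 N, a n ≤ 1 := by
    intro N
    refine (hsum_tail 1 N le_rfl).trans ?_
    exact ENNReal.toReal_mono ENNReal.one_ne_top prob_le_one
  have htailj : ∀ j N : ℕ, 2 ≤ j →
      ∑ n ∈ Finset.Ico j N, a n ≤ K * ((j : ℝ) - 1) ^ (-β) := by
    intro j N hj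
    refine (hsum_tail j N (by omega)).trans ?_
    have := hKbound (j - 1) (by omega)
    have hcast : ((j - 1 : ℕ) : ℝ) = (j : ℝ) - 1 := by
      have : 1 ≤ j := by omega
      push_cast [this]; ring
    rwa [hcast] at this
  set p : ℝ := z * m with hp
  have hppos : 0 < p := by positivity
  have habel := aux_abel p β K hppos hβ hK0 a hann htot htailj
  have main : ∀ k : ℝ, 1 ≤ k →
      (ℙ {ω | k ≤ Y ω}).toReal ≤ K * 2 ^ β * k ^ (-(β / z)) +
        C * k ^ (-m) * (1 + 2 * p * K * 2 ^ β *
          ∑ j ∈ Finset.Ico 2 (⌈k ^ z⁻¹⌉₊), (j : ℝ) ^ (p - 1 - β)) := by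
    intro k hk
    have hk0 : (0:ℝ) < k := by linarith
    set N : ℕ := ⌈k ^ z⁻¹⌉₊ with hN
    have hx1 : (1:ℝ) ≤ k ^ z⁻¹ := Real.one_le_rpow hk (by positivity)
    have hN1 : 1 ≤ N := by
      rw [hN]; exact Nat.ceil_pos.mpr (by linarith)
    -- decomposition
    have hsub : {ω | k ≤ Y ω} ⊆ {ω | (N - 1 : ℕ) < X ω} ∪
        ⋃ n ∈ Finset.Ico 1 N, (Sn n ∩ {ω | k ≤ Y ω}) := by
      intro ω hω
      by_cases hXN : N ≤ X ω
      · left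
        have : N - 1 < X ω := by omega
        exact this
      · right
        refine Set.mem_iUnion₂.mpr ⟨X ω, ?_, rfl, hω⟩
        exact Finset.mem_Ico.mpr ⟨hXpos ω, lt_of_not_ge hXN⟩
    have hmeas1 : ℙ {ω | k ≤ Y ω} ≤ ℙ {ω | (N - 1 : ℕ) < X ω}
        + ∑ n ∈ Finset.Ico 1 N, ℙ (Sn n ∩ {ω | k ≤ Y ω}) := by
      calc ℙ {ω | k ≤ Y ω}
          ≤ ℙ ({ω | (N - 1 : ℕ) < X ω} ∪ ⋃ n ∈ Finset.Ico 1 N, (Sn n ∩ {ω | k ≤ Y ω})) :=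
            measure_mono hsub
        _ ≤ ℙ {ω | (N - 1 : ℕ) < X ω} + ℙ (⋃ n ∈ Finset.Ico 1 N, (Sn n ∩ {ω | k ≤ Y ω})) :=
            measure_union_le _ _
        _ ≤ ℙ {ω | (N - 1 : ℕ) < X ω} + ∑ n ∈ Finset.Ico 1 N, ℙ (Sn n ∩ {ω | k ≤ Y ω}) := by
            exact add_le_add_right (measure_biUnion_finset_le _ _) _
    have hsplitR : (ℙ {ω | k ≤ Y ω}).toReal ≤ (ℙ {ω | (N - 1 : ℕ) < X ω}).toReal
        + ∑ n ∈ Finset.Ico 1 N, (ℙ (Sn n ∩ {ω | k ≤ Y ω})).toReal := by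
      have hsumne : (∑ n ∈ Finset.Ico 1 N, ℙ (Sn n ∩ {ω | k ≤ Y ω})) ≠ ⊤ :=
        (ENNReal.sum_lt_top.mpr fun n _ => measure_lt_top _ _).ne
      have hne : ℙ {ω | (N - 1 : ℕ) < X ω}
          + ∑ n ∈ Finset.Ico 1 N, ℙ (Sn n ∩ {ω | k ≤ Y ω}) ≠ ⊤ :=
        ENNReal.add_ne_top.mpr ⟨measure_ne_top _ _, hsumne⟩
      refine (ENNReal.toReal_mono hne hmeas1).trans_eq ?_
      rw [ENNReal.toReal_add (measure_ne_top _ _) hsumne,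
        ENNReal.toReal_sum fun n _ => measure_ne_top _ _]
    -- per-term conditional bound
    have hterm : ∀ n ∈ Finset.Ico 1 N, (ℙ (Sn n ∩ {ω | k ≤ Y ω})).toReal ≤
        C * k ^ (-m) * ((n : ℝ) ^ p * a n) := by
      intro n hn
      obtain ⟨hn1, hnN⟩ := Finset.mem_Ico.mp hn
      have hnR : (1:ℝ) ≤ (n:ℝ) := by exact_mod_cast hn1
      have hnnn : (0:ℝ) ≤ (n:ℝ) := by linarith
      have hnz : (0:ℝ) < (n:ℝ) ^ z := Real.rpow_pos_of_pos (by linarith) _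
      have hnltx : (n:ℝ) < k ^ z⁻¹ := Nat.lt_ceil.mp hnN
      have hnzk : (n:ℝ) ^ z ≤ k := by
        have h1 : (n:ℝ) ^ z ≤ (k ^ z⁻¹) ^ z :=
          Real.rpow_le_rpow hnnn hnltx.le hz.le
        rwa [← Real.rpow_mul hk0.le, inv_mul_cancel₀ hz.ne', Real.rpow_one] at h1
      set lam : ℝ := k / (n:ℝ) ^ z with hlam
      have hlam1 : 1 ≤ lam := (one_le_div hnz).mpr hnzk
      have hsetEq : {ω | lam * (n:ℝ) ^ z ≤ Y ω} = {ω | k ≤ Y ω} := by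
        rw [hlam, div_mul_cancel₀ _ hnz.ne']
      have hcnd := hcond n hn1 lam hlam1
      rw [hsetEq] at hcnd
      have hlmeq : lam ^ (-m) = k ^ (-m) * (n:ℝ) ^ p := by
        have e1 : ((n:ℝ) ^ z) ^ (-m) = (n:ℝ) ^ (-p) := by
          rw [← Real.rpow_mul hnnn, hp]; ring_nf
        rw [hlam, Real.div_rpow hk0.le hnz.le, e1, Real.rpow_neg hnnn, div_eq_mul_inv, inv_inv]
      rcases eq_or_ne (ℙ (Sn n)) 0 with h0 | h0
      · have hz0 : ℙ (Sn n ∩ {ω | k ≤ Y ω}) = 0 :=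
          measure_mono_null Set.inter_subset_left h0
        rw [hz0]
        simp only [ENNReal.toReal_zero]
        have : (0:ℝ) ≤ C * k ^ (-m) * ((n:ℝ) ^ p * a n) :=
          mul_nonneg (mul_nonneg hC0 (Real.rpow_nonneg hk0.le _))
            (mul_nonneg (Real.rpow_nonneg hnnn _) (hann n))
        linarith
      · have hEq : ℙ (Sn n ∩ {ω | k ≤ Y ω}) = ℙ (Sn n) * (ℙ[|Sn n] {ω | k ≤ Y ω}) := by
          rw [cond_apply (hSnmeas n), ← mul_assoc,
            ENNReal.mul_inv_cancel h0 (measure_ne_top _ _), one_mul]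
        rw [hEq, ENNReal.toReal_mul]
        calc (ℙ (Sn n)).toReal * (ℙ[|Sn n] {ω | k ≤ Y ω}).toReal
            ≤ (ℙ (Sn n)).toReal * (C * lam ^ (-m)) :=
              mul_le_mul_of_nonneg_left hcnd (hann n)
          _ = C * k ^ (-m) * ((n:ℝ) ^ p * a n) := by rw [hlmeq, ha]; ring
    have hsum2 : ∑ n ∈ Finset.Ico 1 N, (ℙ (Sn n ∩ {ω | k ≤ Y ω})).toReal ≤
        C * k ^ (-m) * ∑ n ∈ Finset.Ico 1 N, (n : ℝ) ^ p * a n := by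
      rw [Finset.mul_sum]; exact Finset.sum_le_sum hterm
    have hCk : (0:ℝ) ≤ C * k ^ (-m) := mul_nonneg hC0 (Real.rpow_nonneg hk0.le _)
    have hsum3 := mul_le_mul_of_nonneg_left (habel N) hCk
    -- tail term bound
    have htailterm : (ℙ {ω | (N - 1 : ℕ) < X ω}).toReal ≤ K * 2 ^ β * k ^ (-(β / z)) := by
      have h2b : (1:ℝ) ≤ 2 ^ β := Real.one_le_rpow one_le_two hβ.le
      rcases eq_or_lt_of_le hN1 with hN1' | hN2
      · have hxle : k ^ z⁻¹ ≤ 1 := by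
          have h := Nat.ceil_le.mp (le_of_eq hN1'.symm)
          exact_mod_cast h
        have hxeq : k ^ z⁻¹ = 1 := le_antisymm hxle hx1
        have hkeq : k = 1 := by
          have h := congrArg (fun t : ℝ => t ^ z) hxeq
          simpa [← Real.rpow_mul hk0.le, inv_mul_cancel₀ hz.ne', Real.rpow_one,
            Real.one_rpow] using h
        rw [hkeq, Real.one_rpow, mul_one]
        have hle1 : (ℙ {ω | (N - 1 : ℕ) < X ω}).toReal ≤ 1 :=
          ENNReal.toReal_mono ENNReal.one_ne_top prob_le_one
        nlinarith
      · have hN2' : 2 ≤ N := hN2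
        have hb := hKbound (N - 1) (by omega)
        have hcast : ((N - 1 : ℕ) : ℝ) = (N:ℝ) - 1 := by
          have h1N : 1 ≤ N := by omega
          push_cast [h1N]; ring
        have hNx : k ^ z⁻¹ ≤ (N:ℝ) := Nat.le_ceil _
        have hN2R : (2:ℝ) ≤ (N:ℝ) := by exact_mod_cast hN2'
        have hhalf : k ^ z⁻¹ / 2 ≤ (N:ℝ) - 1 := by linarith
        have hxpos : (0:ℝ) < k ^ z⁻¹ := by linarith
        have h1 : ((N:ℝ) - 1) ^ (-β) ≤ (k ^ z⁻¹ / 2) ^ (-β) :=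
          Real.rpow_le_rpow_of_nonpos (by positivity) hhalf (by linarith)
        have h2 : (k ^ z⁻¹ / 2) ^ (-β) = 2 ^ β * (k ^ z⁻¹) ^ (-β) := by
          rw [Real.div_rpow hxpos.le (by norm_num), div_eq_mul_inv,
            ← Real.rpow_neg (by norm_num : (0:ℝ) ≤ 2), neg_neg]
          ring
        have h3 : (k ^ z⁻¹) ^ (-β) = k ^ (-(β / z)) := by
          rw [← Real.rpow_mul hk0.le]; congr 1; field_simp
        rw [hcast] at hb
        calc (ℙ {ω | (N - 1 : ℕ) < X ω}).toReal ≤ K * ((N:ℝ) - 1) ^ (-β) := hb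
          _ ≤ K * (2 ^ β * k ^ (-(β / z))) := by
              apply mul_le_mul_of_nonneg_left _ hK0
              rw [← h3, ← h2]; exact h1
          _ = K * 2 ^ β * k ^ (-(β / z)) := by ring
    linarith
  -- final case analysis
  have hpne : p ≠ β := by
    intro h
    apply hmz
    rw [eq_div_iff hz.ne']
    rw [hp] at h
    linarith
  rcases lt_or_gt_of_ne hpne with hplt | hpgt
  · -- p < β, exponent is m
    obtain ⟨Z, hZ0, hZ⟩ := aux_sum_lt (p - 1 - β) (by linarith)
    refine ⟨K * 2 ^ β + C * (1 + 2 * p * K * 2 ^ β * Z), fun k hk => ?_⟩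
    have hk0 : (0:ℝ) < k := by linarith
    have hmβz : m ≤ β / z := by
      rw [le_div_iff₀ hz]; rw [hp] at hplt; linarith
    have hmin : min (β / z) m = m := min_eq_right hmβz
    rw [hmin]
    have h1 := main k hk
    have hG := hZ ⌈k ^ z⁻¹⌉₊
    have hkm : (0:ℝ) ≤ k ^ (-m) := Real.rpow_nonneg hk0.le _
    have hbz : k ^ (-(β / z)) ≤ k ^ (-m) :=
      Real.rpow_le_rpow_of_exponent_le hk (by linarith)
    have hcoef : (0:ℝ) ≤ 2 * p * K * 2 ^ β := by positivity
    have hKb : (0:ℝ) ≤ K * 2 ^ β := by positivity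
    have e1 : K * 2 ^ β * k ^ (-(β / z)) ≤ K * 2 ^ β * k ^ (-m) :=
      mul_le_mul_of_nonneg_left hbz hKb
    have e2 : C * k ^ (-m) * (1 + 2 * p * K * 2 ^ β *
          ∑ j ∈ Finset.Ico 2 (⌈k ^ z⁻¹⌉₊), (j : ℝ) ^ (p - 1 - β))
        ≤ C * k ^ (-m) * (1 + 2 * p * K * 2 ^ β * Z) := by
      apply mul_le_mul_of_nonneg_left _ (mul_nonneg hC0 hkm)
      have := mul_le_mul_of_nonneg_left hG hcoef
      linarith
    calc (ℙ {ω | k ≤ Y ω}).toReal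
        ≤ K * 2 ^ β * k ^ (-(β / z)) + C * k ^ (-m) * (1 + 2 * p * K * 2 ^ β *
            ∑ j ∈ Finset.Ico 2 (⌈k ^ z⁻¹⌉₊), (j : ℝ) ^ (p - 1 - β)) := h1
      _ ≤ K * 2 ^ β * k ^ (-m) + C * k ^ (-m) * (1 + 2 * p * K * 2 ^ β * Z) := by
          linarith
      _ = (K * 2 ^ β + C * (1 + 2 * p * K * 2 ^ β * Z)) * k ^ (-m) := by ring
  · -- β < p, exponent is β / z
    obtain ⟨D, hD0, hD⟩ := aux_sum_gt (p - 1 - β) (by linarith)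
    refine ⟨K * 2 ^ β + C + C * (2 * p * K * 2 ^ β) * (D * 2 ^ (p - β)), fun k hk => ?_⟩
    have hk0 : (0:ℝ) < k := by linarith
    have hβzm : β / z ≤ m := by
      rw [div_le_iff₀ hz]; rw [hp] at hpgt; linarith
    have hmin : min (β / z) m = β / z := min_eq_left hβzm
    rw [hmin]
    have h1 := main k hk
    have hx1 : (1:ℝ) ≤ k ^ z⁻¹ := Real.one_le_rpow hk (by positivity)
    set N : ℕ := ⌈k ^ z⁻¹⌉₊ with hN
    have hG := hD N
    rw [show p - 1 - β + 1 = p - β by ring] at hG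
    have hNle : (N:ℝ) ≤ 2 * k ^ z⁻¹ := by
      have h := Nat.ceil_lt_add_one (by positivity : (0:ℝ) ≤ k ^ z⁻¹)
      rw [hN]; linarith
    have hNp : (N:ℝ) ^ (p - β) ≤ 2 ^ (p - β) * k ^ ((p - β) / z) := by
      have hc1 : (N:ℝ) ^ (p - β) ≤ (2 * k ^ z⁻¹) ^ (p - β) :=
        Real.rpow_le_rpow (Nat.cast_nonneg N) hNle (by linarith)
      have hc2 : ((2:ℝ) * k ^ z⁻¹) ^ (p - β) = 2 ^ (p - β) * (k ^ z⁻¹) ^ (p - β) :=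
        Real.mul_rpow (by norm_num) (by positivity)
      have hc3 : (k ^ z⁻¹) ^ (p - β) = k ^ ((p - β) / z) := by
        rw [← Real.rpow_mul hk0.le]; congr 1; field_simp
      calc (N:ℝ) ^ (p - β) ≤ (2 * k ^ z⁻¹) ^ (p - β) := hc1
        _ = 2 ^ (p - β) * k ^ ((p - β) / z) := by rw [hc2, hc3]
    have hexp : k ^ (-m) * k ^ ((p - β) / z) = k ^ (-(β / z)) := by
      rw [← Real.rpow_add hk0]
      congr 1
      rw [hp]
      field_simp
      ring
    have hbm : k ^ (-m) ≤ k ^ (-(β / z)) :=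
      Real.rpow_le_rpow_of_exponent_le hk (by linarith)
    have hkm : (0:ℝ) ≤ k ^ (-m) := Real.rpow_nonneg hk0.le _
    have hkbz : (0:ℝ) ≤ k ^ (-(β / z)) := Real.rpow_nonneg hk0.le _
    have hcoef : (0:ℝ) ≤ 2 * p * K * 2 ^ β := by positivity
    have hGnn : (0:ℝ) ≤ ∑ j ∈ Finset.Ico 2 N, (j : ℝ) ^ (p - 1 - β) :=
      Finset.sum_nonneg fun j _ => Real.rpow_nonneg (Nat.cast_nonneg j) _
    have e2 : C * k ^ (-m) * (1 + 2 * p * K * 2 ^ β *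
          ∑ j ∈ Finset.Ico 2 N, (j : ℝ) ^ (p - 1 - β))
        ≤ C * k ^ (-m) + C * (2 * p * K * 2 ^ β) * (D * 2 ^ (p - β)) * k ^ (-(β / z)) := by
      have s1 : (∑ j ∈ Finset.Ico 2 N, (j : ℝ) ^ (p - 1 - β)) ≤
          D * (2 ^ (p - β) * k ^ ((p - β) / z)) := by
        refine hG.trans ?_
        exact mul_le_mul_of_nonneg_left hNp hD0
      have s2 : C * k ^ (-m) * (1 + 2 * p * K * 2 ^ β *
            ∑ j ∈ Finset.Ico 2 N, (j : ℝ) ^ (p - 1 - β))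
          ≤ C * k ^ (-m) * (1 + 2 * p * K * 2 ^ β *
            (D * (2 ^ (p - β) * k ^ ((p - β) / z)))) := by
        apply mul_le_mul_of_nonneg_left _ (mul_nonneg hC0 hkm)
        have := mul_le_mul_of_nonneg_left s1 hcoef
        linarith
      refine s2.trans ?_
      have expand : C * k ^ (-m) * (1 + 2 * p * K * 2 ^ β *
            (D * (2 ^ (p - β) * k ^ ((p - β) / z))))
          = C * k ^ (-m) + C * (2 * p * K * 2 ^ β) * (D * 2 ^ (p - β)) *
            (k ^ (-m) * k ^ ((p - β) / z)) := by ring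
      rw [expand, hexp]
    have e1 : K * 2 ^ β * k ^ (-(β / z)) ≤ K * 2 ^ β * k ^ (-(β / z)) := le_rfl
    have e3 : C * k ^ (-m) ≤ C * k ^ (-(β / z)) := mul_le_mul_of_nonneg_left hbm hC0
    calc (ℙ {ω | k ≤ Y ω}).toReal
        ≤ K * 2 ^ β * k ^ (-(β / z)) + C * k ^ (-m) * (1 + 2 * p * K * 2 ^ β *
            ∑ j ∈ Finset.Ico 2 N, (j : ℝ) ^ (p - 1 - β)) := h1
      _ ≤ K * 2 ^ β * k ^ (-(β / z)) + (C * k ^ (-(β / z))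
            + C * (2 * p * K * 2 ^ β) * (D * 2 ^ (p - β)) * k ^ (-(β / z))) := by
          linarith
      _ = (K * 2 ^ β + C + C * (2 * p * K * 2 ^ β) * (D * 2 ^ (p - β))) * k ^ (-(β / z)) := by
          ring
end

section
/- Let (X_i)_{i≥1} be nonnegative i.i.d. random variables with P(X_1 > x) ~ c·x^{-1} as x → ∞ for some c ∈ (0,∞). For k ≥ 1 let T^{(k)} = inf{i ≥ 1 : X_i > k} and S^{(k)} = Σ_{i=1}^{T^{(k)}-1} X_i. Then there exist constants c', C' ∈ (0,∞) such that for all k ≥ 2 and all λ ≥ 1, P(S^{(k)} ≥ λ·k·log k) ≤ C'·e^{-c'·λ}. -/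
open MeasureTheory ProbabilityTheory Filter Real

section helpers

variable {Ω : Type*} [MeasureSpace Ω] [IsProbabilityMeasure (ℙ : Measure Ω)]

lemma aux_integral_prod_comp'
    (X : ℕ → Ω → ℝ) (hmeas : ∀ i, Measurable (X i))
    (hindep : iIndepFun X ℙ)
    (g : ℕ → ℝ → ℝ) (hg : ∀ i, Measurable (g i))
    (hgnn : ∀ i x, 0 ≤ g i x) :
    ∀ n, ∫ ω, ∏ i ∈ Finset.range n, g i (X i ω) = ∏ i ∈ Finset.range n, ∫ ω, g i (X i ω) := by
  intro n
  induction n with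
  | zero => simp
  | succ n ih =>
    have hcomp : iIndepFun
        (fun i => g i ∘ X i) ℙ := hindep.comp g hg
    have hmeas' : ∀ i, Measurable (g i ∘ X i) := fun i => (hg i).comp (hmeas i)
    have hind : IndepFun (∏ j ∈ Finset.range n, (g j ∘ X j)) (g n ∘ X n) ℙ :=
      hcomp.indepFun_prod_range_succ hmeas' n
    have hprodnn : 0 ≤ (∏ j ∈ Finset.range n, (g j ∘ X j)) := by
      intro ω
      simp only [Finset.prod_apply]
      exact Finset.prod_nonneg fun i _ => hgnn i _
    have := hind.integral_mul_eq_mul_integral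
      (by simpa [Finset.prod_fn] using (Finset.measurable_prod (Finset.range n) (fun i _ => hmeas' i)).aestronglyMeasurable)
      (hmeas' n).aestronglyMeasurable
    simp only [Finset.prod_range_succ]
    calc ∫ ω, (∏ i ∈ Finset.range n, g i (X i ω)) * g n (X n ω)
        = ∫ ω, ((∏ j ∈ Finset.range n, (g j ∘ X j)) * (g n ∘ X n)) ω := by
          congr 1; funext ω; simp [Finset.prod_apply]
      _ = (∫ ω, (∏ j ∈ Finset.range n, (g j ∘ X j)) ω) * ∫ ω, (g n ∘ X n) ω := this
      _ = (∏ i ∈ Finset.range n, ∫ ω, g i (X i ω)) * ∫ ω, g n (X n ω) := by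
          rw [← ih]; congr 1; · congr 1; funext ω; simp [Finset.prod_apply]


lemma aux_tail_bounds' (X : ℕ → Ω → ℝ) (c : ℝ) (hc : 0 < c)
    (htail : Tendsto (fun x : ℝ => (ℙ {ω | x < X 0 ω}).toReal / (c * x ^ (-(1 : ℝ))))
      atTop (nhds 1)) :
    ∃ k0 : ℝ, 2 ≤ k0 ∧ ∀ x, k0 ≤ x →
      c / (2 * x) ≤ (ℙ {ω | x < X 0 ω}).toReal ∧ (ℙ {ω | x < X 0 ω}).toReal ≤ 2 * c / x := by
  have h := Metric.tendsto_nhds.mp htail (1/2) (by norm_num)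
  rw [eventually_atTop] at h
  obtain ⟨N, hN⟩ := h
  refine ⟨max N 2, le_max_right _ _, fun x hx => ?_⟩
  have hx2 : (2:ℝ) ≤ x := le_trans (le_max_right _ _) hx
  have hx0 : (0:ℝ) < x := by linarith
  have hd := hN x (le_trans (le_max_left _ _) hx)
  rw [Real.dist_eq] at hd
  have hpow : x ^ (-(1:ℝ)) = x⁻¹ := Real.rpow_neg_one x
  set P := (ℙ {ω | x < X 0 ω}).toReal with hP
  rw [hpow] at hd
  have hden : 0 < c * x⁻¹ := mul_pos hc (inv_pos.mpr hx0)
  have h1 : 1/2 < P / (c * x⁻¹) := by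
    have := abs_lt.mp hd
    linarith [this.1]
  have h2 : P / (c * x⁻¹) < 3/2 := by
    have := abs_lt.mp hd
    linarith [this.2]
  constructor
  · rw [lt_div_iff₀ hden] at h1
    calc c / (2*x) = (1/2) * (c * x⁻¹) := by field_simp
      _ ≤ P := by nlinarith
  · rw [div_lt_iff₀ hden] at h2
    calc P ≤ (3/2) * (c * x⁻¹) := by linarith
      _ ≤ 2 * c / x := by rw [div_eq_mul_inv (2*c)]; nlinarith [inv_pos.mpr hx0]


lemma aux_integral_if_le' (Y : Ω → ℝ) (hY : Measurable Y) (k : ℝ) :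
    ∫ ω, (if Y ω ≤ k then (1:ℝ) else 0) = (ℙ {ω | Y ω ≤ k}).toReal := by
  have hs : MeasurableSet {ω | Y ω ≤ k} := hY measurableSet_Iic
  rw [show (fun ω => if Y ω ≤ k then (1:ℝ) else 0)
      = Set.indicator {ω | Y ω ≤ k} (fun _ => (1:ℝ)) from by
    funext ω; simp [Set.indicator_apply]]
  rw [integral_indicator_const _ hs]
  simp
  rfl


lemma aux_integral_if_lt (Y : Ω → ℝ) (hY : Measurable Y) (k : ℝ) :
    ∫ ω, (if k < Y ω then (1:ℝ) else 0) = (ℙ {ω | k < Y ω}).toReal := by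
  have hs : MeasurableSet {ω | k < Y ω} := hY measurableSet_Ioi
  rw [show (fun ω => if k < Y ω then (1:ℝ) else 0)
      = Set.indicator {ω | k < Y ω} (fun _ => (1:ℝ)) from by
    funext ω; simp [Set.indicator_apply]]
  rw [integral_indicator_const _ hs]
  simp
  rfl


lemma aux_prob_le_eq' (Y : Ω → ℝ) (hY : Measurable Y) (k : ℝ) :
    (ℙ {ω | Y ω ≤ k}).toReal = 1 - (ℙ {ω | k < Y ω}).toReal := by
  have hcompl : {ω | Y ω ≤ k} = {ω | k < Y ω}ᶜ := by
    ext ω; simp [not_lt]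
  have hms : MeasurableSet {ω | k < Y ω} := hY measurableSet_Ioi
  rw [hcompl, measure_compl hms (measure_ne_top _ _)]
  rw [measure_univ, ENNReal.toReal_sub_of_le prob_le_one (by simp)]
  simp


lemma trunc_mean_le' (Y : Ω → ℝ) (hY : Measurable Y) (hYnn : ∀ ω, 0 ≤ Y ω)
    (c k0 : ℝ) (hc : 0 < c) (hk0 : 2 ≤ k0)
    (hub : ∀ x, k0 ≤ x → (ℙ {ω | x < Y ω}).toReal ≤ 2 * c / x)
    (k : ℝ) (hk : 2 ≤ k) :
    ∫ ω, (if Y ω ≤ k then Y ω else 0) ≤ (k0 + 4 * c) / Real.log 2 * Real.log k := by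
  have hk0pos : (0:ℝ) < k0 := by linarith
  have hex : ∃ n : ℕ, k ≤ k0 * 2 ^ n := by
    obtain ⟨n, hn⟩ := pow_unbounded_of_one_lt (k / k0) (one_lt_two (α := ℝ))
    exact ⟨n, by rw [div_lt_iff₀ hk0pos] at hn; nlinarith⟩
  set J := Nat.find hex with hJdef
  have hJ : k ≤ k0 * 2 ^ J := Nat.find_spec hex
  -- indicator functions
  set ind : ℕ → Ω → ℝ := fun j ω => if k0 * 2 ^ j < Y ω then (1:ℝ) else 0 with hind
  have hindmeas : ∀ j, Measurable (ind j) := fun j =>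
    Measurable.ite (hY measurableSet_Ioi) measurable_const measurable_const
  have hindint : ∀ j, Integrable (ind j) ℙ := fun j => by
    refine Integrable.mono' (integrable_const 1) (hindmeas j).aestronglyMeasurable ?_
    filter_upwards with ω
    by_cases h : k0 * 2 ^ j < Y ω <;> simp [hind, h]
  have hindnn : ∀ j ω, 0 ≤ ind j ω := fun j ω => by
    by_cases h : k0 * 2 ^ j < Y ω <;> simp [hind, h]
  -- LHS integrable
  have hlmeas : Measurable (fun ω => if Y ω ≤ k then Y ω else 0) :=
    Measurable.ite (hY measurableSet_Iic) hY measurable_const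
  have hlint : Integrable (fun ω => if Y ω ≤ k then Y ω else 0) ℙ := by
    refine Integrable.mono' (integrable_const k) hlmeas.aestronglyMeasurable ?_
    filter_upwards with ω
    by_cases h : Y ω ≤ k
    · simpa [h, abs_of_nonneg (hYnn ω)] using h
    · simp [h]; linarith
  -- RHS
  set R : Ω → ℝ := fun ω => k0 + ∑ j ∈ Finset.range J, k0 * 2 ^ (j+1) * ind j ω with hR
  have hrint : Integrable R ℙ := by
    exact (integrable_const k0).add
      (integrable_finset_sum _ fun j _ => (hindint j).const_mul _)
  -- pointwise bound
  have hpt : ∀ ω, (if Y ω ≤ k then Y ω else 0) ≤ R ω := by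
    intro ω
    have hsumnn : 0 ≤ ∑ j ∈ Finset.range J, k0 * 2 ^ (j+1) * ind j ω :=
      Finset.sum_nonneg fun j _ =>
        mul_nonneg (mul_nonneg hk0pos.le (by positivity)) (hindnn j ω)
    by_cases h : Y ω ≤ k
    · simp only [h, if_true]
      by_cases h2 : Y ω ≤ k0
      · simp only [hR]; linarith
      · push_neg at h2
        -- find first j1 with Y ω ≤ k0 * 2 ^ j1
        have hex2 : ∃ m : ℕ, Y ω ≤ k0 * 2 ^ m := ⟨J, le_trans h hJ⟩
        set j1 := Nat.find hex2 with hj1def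
        have hj1 : Y ω ≤ k0 * 2 ^ j1 := Nat.find_spec hex2
        have hj1pos : j1 ≠ 0 := by
          intro h0
          rw [h0] at hj1; simp at hj1; linarith
        obtain ⟨m, hm⟩ := Nat.exists_eq_succ_of_ne_zero hj1pos
        have hmlt : k0 * 2 ^ m < Y ω := by
          have := Nat.find_min hex2 (m := m) (by omega)
          linarith [not_le.mp this]
        have hj1leJ : j1 ≤ J := Nat.find_le (le_trans h hJ)
        have hmJ : m < J := by omega
        have hterm : k0 * 2 ^ (m+1) * ind m ω = k0 * 2 ^ (m+1) := by
          simp [hind, hmlt]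
        have hsingle : k0 * 2 ^ (m+1) * ind m ω
            ≤ ∑ j ∈ Finset.range J, k0 * 2 ^ (j+1) * ind j ω := by
          refine Finset.single_le_sum (f := fun j => k0 * 2 ^ (j+1) * ind j ω) (fun j _ =>
            mul_nonneg (mul_nonneg hk0pos.le (by positivity)) (hindnn j ω)) ?_
          exact Finset.mem_range.mpr hmJ
        have : Y ω ≤ k0 * 2 ^ (m+1) := by rw [show m+1 = j1 from by omega]; exact hj1
        simp only [hR]
        rw [hterm] at hsingle
        linarith
    · simp only [h, if_false, hR]; linarith
  have hmono := integral_mono hlint hrint hpt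
  -- compute RHS integral
  have hRval : ∫ ω, R ω = k0 + ∑ j ∈ Finset.range J,
      k0 * 2 ^ (j+1) * (ℙ {ω | k0 * 2 ^ j < Y ω}).toReal := by
    simp only [hR]
    rw [integral_add (integrable_const k0)
      (integrable_finset_sum _ fun j _ => (hindint j).const_mul _)]
    rw [integral_const]
    simp only [Measure.real, measure_univ, ENNReal.toReal_one, smul_eq_mul, one_mul]
    congr 1
    rw [integral_finset_sum _ fun j _ => (hindint j).const_mul _]
    refine Finset.sum_congr rfl fun j _ => ?_
    rw [integral_const_mul, aux_integral_if_lt Y hY]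
  -- bound terms
  have hterm : ∀ j ∈ Finset.range J,
      k0 * 2 ^ (j+1) * (ℙ {ω | k0 * 2 ^ j < Y ω}).toReal ≤ 4 * c := by
    intro j _
    have hx : k0 ≤ k0 * 2 ^ j := le_mul_of_one_le_right hk0pos.le (one_le_pow₀ one_le_two)
    have hxpos : (0:ℝ) < k0 * 2 ^ j := by positivity
    have := hub (k0 * 2 ^ j) hx
    calc k0 * 2 ^ (j+1) * (ℙ {ω | k0 * 2 ^ j < Y ω}).toReal
        ≤ k0 * 2 ^ (j+1) * (2 * c / (k0 * 2 ^ j)) := by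
          refine mul_le_mul_of_nonneg_left this (by positivity)
      _ = 4 * c := by field_simp; ring
  have hsum : ∑ j ∈ Finset.range J, k0 * 2 ^ (j+1) * (ℙ {ω | k0 * 2 ^ j < Y ω}).toReal
      ≤ 4 * c * J := by
    calc _ ≤ ∑ _j ∈ Finset.range J, 4 * c := Finset.sum_le_sum hterm
      _ = 4 * c * J := by simp [mul_comm]
  -- J bound
  have hlog2 : (0:ℝ) < Real.log 2 := Real.log_pos one_lt_two
  have hlogk : Real.log 2 ≤ Real.log k := Real.log_le_log (by norm_num) hk
  have hJlog : (J:ℝ) * Real.log 2 ≤ Real.log k := by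
    rcases Nat.eq_zero_or_pos J with h0 | hpos
    · rw [h0]; simp; linarith
    · obtain ⟨m, hm⟩ := Nat.exists_eq_succ_of_ne_zero hpos.ne'
      have hmin : k0 * 2 ^ m < k := by
        have := Nat.find_min hex (m := m) (by omega)
        linarith [not_le.mp this]
      have h2J : (2:ℝ) ^ J ≤ k := by
        rw [hm]
        have : (2:ℝ) ^ (m+1) = 2 * 2 ^ m := by ring
        rw [this]
        nlinarith [pow_pos (zero_lt_two (α := ℝ)) m]
      calc (J:ℝ) * Real.log 2 = Real.log ((2:ℝ) ^ J) := by rw [Real.log_pow]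
        _ ≤ Real.log k := Real.log_le_log (by positivity) h2J
  -- combine
  rw [hRval] at hmono
  have hfin : k0 + 4 * c * J ≤ (k0 + 4 * c) / Real.log 2 * Real.log k := by
    rw [div_mul_eq_mul_div, le_div_iff₀ hlog2]
    nlinarith [hJlog, hlogk, Nat.cast_nonneg (α := ℝ) J]
  linarith


lemma mgf_bound' (Y : Ω → ℝ) (hY : Measurable Y) (hYnn : ∀ ω, 0 ≤ Y ω)
    (k t : ℝ) (ht : 0 < t) (htk : t * k ≤ Real.log 2) (hk : 0 ≤ k) :
    ∫ ω, (if Y ω ≤ k then Real.exp (t * Y ω) else 0)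
      ≤ (ℙ {ω | Y ω ≤ k}).toReal + 2 * t * ∫ ω, (if Y ω ≤ k then Y ω else 0) := by
  have hexp2 : Real.exp (t * k) ≤ 2 := by
    calc Real.exp (t * k) ≤ Real.exp (Real.log 2) := Real.exp_le_exp.mpr htk
      _ = 2 := Real.exp_log two_pos
  have hlmeas : Measurable (fun ω => if Y ω ≤ k then Real.exp (t * Y ω) else 0) :=
    Measurable.ite (hY measurableSet_Iic) (Real.measurable_exp.comp (hY.const_mul t))
      measurable_const
  have hlint : Integrable (fun ω => if Y ω ≤ k then Real.exp (t * Y ω) else 0) ℙ := by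
    refine Integrable.mono' (integrable_const 2) hlmeas.aestronglyMeasurable ?_
    filter_upwards with ω
    by_cases h : Y ω ≤ k
    · simp only [h, if_true, Real.norm_eq_abs, abs_of_nonneg (Real.exp_nonneg _)]
      calc Real.exp (t * Y ω) ≤ Real.exp (t * k) :=
            Real.exp_le_exp.mpr (mul_le_mul_of_nonneg_left h ht.le)
        _ ≤ 2 := hexp2
    · simp [h]
  have htrmeas : Measurable (fun ω => if Y ω ≤ k then Y ω else 0) :=
    Measurable.ite (hY measurableSet_Iic) hY measurable_const
  have htrint : Integrable (fun ω => if Y ω ≤ k then Y ω else 0) ℙ := by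
    refine Integrable.mono' (integrable_const k) htrmeas.aestronglyMeasurable ?_
    filter_upwards with ω
    by_cases h : Y ω ≤ k
    · simpa [h, abs_of_nonneg (hYnn ω)] using h
    · simp [h]; linarith
  have hindint : Integrable (fun ω => if Y ω ≤ k then (1:ℝ) else 0) ℙ := by
    refine Integrable.mono' (integrable_const 1)
      (Measurable.ite (hY measurableSet_Iic) measurable_const
        measurable_const).aestronglyMeasurable ?_
    filter_upwards with ω
    by_cases h : Y ω ≤ k <;> simp [h]
  have hpt : ∀ ω, (if Y ω ≤ k then Real.exp (t * Y ω) else 0)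
      ≤ (if Y ω ≤ k then (1:ℝ) else 0) + 2 * t * (if Y ω ≤ k then Y ω else 0) := by
    intro ω
    by_cases h : Y ω ≤ k
    · simp only [h, if_true]
      have hy : 0 ≤ t * Y ω := mul_nonneg ht.le (hYnn ω)
      have h1 : 1 - t * Y ω ≤ Real.exp (-(t * Y ω)) := by
        have := Real.add_one_le_exp (-(t * Y ω)); linarith
      have hepos : (0:ℝ) < Real.exp (t * Y ω) := Real.exp_pos _
      have h2 : Real.exp (t * Y ω) ≤ 1 + t * Y ω * Real.exp (t * Y ω) := by
        have hmul := mul_le_mul_of_nonneg_right h1 hepos.le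
        rw [← Real.exp_add] at hmul
        simp at hmul
        nlinarith
      have h3 : Real.exp (t * Y ω) ≤ Real.exp (t * k) :=
        Real.exp_le_exp.mpr (mul_le_mul_of_nonneg_left h ht.le)
      nlinarith [mul_nonneg ht.le (hYnn ω)]
    · simp [h]
  have hmono := integral_mono hlint (hindint.add ((htrint.const_mul (2*t)))) hpt
  simp only [Pi.add_apply] at hmono
  rw [integral_add hindint (htrint.const_mul (2*t)), integral_const_mul,
    aux_integral_if_le' Y hY] at hmono
  exact hmono


lemma aux_event_bound'
    (X : ℕ → Ω → ℝ) (hmeas : ∀ i, Measurable (X i))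
    (hindep : iIndepFun X ℙ)
    (k t s m p : ℝ) (ht : 0 < t) (htk : t * k ≤ Real.log 2) (hs : 0 ≤ s)
    (hm : ∀ i, ∫ ω, (if X i ω ≤ k then Real.exp (t * X i ω) else 0) = m)
    (hp : ∀ i, (ℙ {ω | k < X i ω}).toReal = p)
    (hmnn : 0 ≤ m) (n : ℕ) :
    (ℙ {ω | (∀ i < n, X i ω ≤ k) ∧ s ≤ ∑ i ∈ Finset.range n, X i ω ∧ k < X n ω}).toReal
      ≤ Real.exp (-(t*s)) * (m ^ n * p) := by
  have hexp2 : Real.exp (t * k) ≤ 2 := by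
    calc Real.exp (t * k) ≤ Real.exp (Real.log 2) := Real.exp_le_exp.mpr htk
      _ = 2 := Real.exp_log two_pos
  set gle : ℝ → ℝ := fun x => if x ≤ k then Real.exp (t * x) else 0 with hgle
  set ggt : ℝ → ℝ := fun x => if k < x then (1:ℝ) else 0 with hggt
  set g : ℕ → ℝ → ℝ := fun i => if i = n then ggt else gle with hg
  have hglem : Measurable gle :=
    Measurable.ite measurableSet_Iic (Real.measurable_exp.comp (measurable_id.const_mul t))
      measurable_const
  have hggtm : Measurable ggt :=
    Measurable.ite measurableSet_Ioi measurable_const measurable_const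
  have hgm : ∀ i, Measurable (g i) := by
    intro i
    by_cases h : i = n
    · simp only [hg, if_pos h]; exact hggtm
    · simp only [hg, if_neg h]; exact hglem
  have hglenn : ∀ x, 0 ≤ gle x := fun x => by
    by_cases h : x ≤ k <;> simp [hgle, h, Real.exp_nonneg]
  have hggtnn : ∀ x, 0 ≤ ggt x := fun x => by
    by_cases h : k < x <;> simp [hggt, h]
  have hgnn : ∀ i x, 0 ≤ g i x := by
    intro i x
    by_cases h : i = n
    · simp only [hg, if_pos h]; exact hggtnn x
    · simp only [hg, if_neg h]; exact hglenn x
  have hgle2 : ∀ x, gle x ≤ 2 := fun x => by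
    by_cases h : x ≤ k
    · simp only [hgle, h, if_true]
      calc Real.exp (t * x) ≤ Real.exp (t * k) :=
          Real.exp_le_exp.mpr (mul_le_mul_of_nonneg_left h ht.le)
        _ ≤ 2 := hexp2
    · simp [hgle, h]
  have hg2 : ∀ i x, g i x ≤ 2 := by
    intro i x
    by_cases h : i = n
    · simp only [hg, if_pos h]
      by_cases h2 : k < x <;> simp [hggt, h2] <;> norm_num
    · simp only [hg, if_neg h]; exact hgle2 x
  set F : Ω → ℝ := fun ω => ∏ i ∈ Finset.range (n+1), g i (X i ω) with hF
  have hFm : Measurable F := by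
    apply Finset.measurable_prod
    exact fun i _ => (hgm i).comp (hmeas i)
  have hFnn : ∀ ω, 0 ≤ F ω := fun ω => Finset.prod_nonneg fun i _ => hgnn i _
  have hFbd : ∀ ω, F ω ≤ 2 ^ (n+1) := by
    intro ω
    calc F ω ≤ ∏ _i ∈ Finset.range (n+1), (2:ℝ) :=
        Finset.prod_le_prod (fun i _ => hgnn i _) (fun i _ => hg2 i _)
      _ = 2 ^ (n+1) := by simp
  have hFint : Integrable F ℙ := by
    refine Integrable.mono' (integrable_const ((2:ℝ) ^ (n+1))) hFm.aestronglyMeasurable ?_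
    filter_upwards with ω
    rw [Real.norm_eq_abs, abs_of_nonneg (hFnn ω)]
    exact hFbd ω
  -- event is included in superlevel set
  have hsub : {ω | (∀ i < n, X i ω ≤ k) ∧ s ≤ ∑ i ∈ Finset.range n, X i ω ∧ k < X n ω}
      ⊆ {ω | Real.exp (t*s) ≤ F ω} := by
    rintro ω ⟨h1, h2, h3⟩
    have hFval : F ω = (∏ i ∈ Finset.range n, gle (X i ω)) * ggt (X n ω) := by
      rw [hF]
      simp only
      rw [Finset.prod_range_succ]
      congr 1
      · refine Finset.prod_congr rfl fun i hi => ?_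
        have : i ≠ n := Nat.ne_of_lt (Finset.mem_range.mp hi)
        simp [hg, this]
      · simp [hg]
    have hprod : ∏ i ∈ Finset.range n, gle (X i ω)
        = Real.exp (∑ i ∈ Finset.range n, t * X i ω) := by
      rw [Real.exp_sum]
      refine Finset.prod_congr rfl fun i hi => ?_
      simp [hgle, h1 i (Finset.mem_range.mp hi)]
    have hggt1 : ggt (X n ω) = 1 := by simp [hggt, h3]
    rw [Set.mem_setOf_eq, hFval, hggt1, mul_one, hprod]
    rw [Real.exp_le_exp, ← Finset.mul_sum]
    exact mul_le_mul_of_nonneg_left h2 ht.le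
  -- Markov
  have hmark := mul_meas_ge_le_integral_of_nonneg (ae_of_all _ hFnn) hFint (Real.exp (t*s))
  have hFval : ∫ ω, F ω = m ^ n * p := by
    rw [hF]
    rw [aux_integral_prod_comp' X hmeas hindep g hgm hgnn (n+1)]
    rw [Finset.prod_range_succ]
    have h1 : ∀ i ∈ Finset.range n, ∫ ω, g i (X i ω) = m := by
      intro i hi
      have hne : i ≠ n := Nat.ne_of_lt (Finset.mem_range.mp hi)
      simp only [hg, if_neg hne]
      exact hm i
    have h2 : ∫ ω, g n (X n ω) = p := by
      simp only [hg, if_pos rfl]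
      have := aux_integral_if_lt (X n) (hmeas n) k
      rw [show (∫ ω, ggt (X n ω)) = ∫ ω, (if k < X n ω then (1:ℝ) else 0) from rfl, this]
      exact hp n
    rw [Finset.prod_congr rfl h1, h2, Finset.prod_const, Finset.card_range]
  have hmono : (ℙ {ω | (∀ i < n, X i ω ≤ k) ∧ s ≤ ∑ i ∈ Finset.range n, X i ω ∧ k < X n ω}).toReal
      ≤ (ℙ {ω | Real.exp (t*s) ≤ F ω}).toReal :=
    ENNReal.toReal_mono (measure_ne_top _ _) (measure_mono hsub)
  have hexpos : (0:ℝ) < Real.exp (t*s) := Real.exp_pos _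
  calc (ℙ {ω | (∀ i < n, X i ω ≤ k) ∧ s ≤ ∑ i ∈ Finset.range n, X i ω ∧ k < X n ω}).toReal
      ≤ (ℙ {ω | Real.exp (t*s) ≤ F ω}).toReal := hmono
    _ ≤ (∫ ω, F ω) / Real.exp (t*s) := by
        rw [le_div_iff₀ hexpos, mul_comm]; exact hmark
    _ = Real.exp (-(t*s)) * (m ^ n * p) := by
        rw [hFval, Real.exp_neg, div_eq_inv_mul]


lemma aux_below_prob'
    (X : ℕ → Ω → ℝ) (hmeas : ∀ i, Measurable (X i))
    (hindep : iIndepFun X ℙ)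
    (k q : ℝ) (hq : ∀ i, (ℙ {ω | X i ω ≤ k}).toReal = q) (n : ℕ) :
    (ℙ {ω | ∀ i < n, X i ω ≤ k}).toReal = q ^ n := by
  set g : ℕ → ℝ → ℝ := fun _ x => if x ≤ k then (1:ℝ) else 0 with hg
  have hgm : ∀ i, Measurable (g i) := fun i =>
    Measurable.ite measurableSet_Iic measurable_const measurable_const
  have hgnn : ∀ i x, 0 ≤ g i x := fun i x => by
    by_cases h : x ≤ k <;> simp [hg, h]
  have hset : {ω | ∀ i < n, X i ω ≤ k} = ⋂ i ∈ Finset.range n, {ω | X i ω ≤ k} := by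
    ext ω; simp [Finset.mem_range]
  have hms : MeasurableSet {ω | ∀ i < n, X i ω ≤ k} := by
    rw [hset]
    exact Set.Finite.measurableSet_biInter (Finset.finite_toSet _)
      (fun i _ => (hmeas i) measurableSet_Iic)
  have hptwise : ∀ ω, (∏ i ∈ Finset.range n, g i (X i ω))
      = Set.indicator {ω | ∀ i < n, X i ω ≤ k} (fun _ => (1:ℝ)) ω := by
    intro ω
    by_cases h : ∀ i < n, X i ω ≤ k
    · rw [Set.indicator_of_mem (show ω ∈ {ω | ∀ i < n, X i ω ≤ k} from h)]
      refine Finset.prod_eq_one fun i hi => ?_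
      simp [hg, h i (Finset.mem_range.mp hi)]
    · rw [Set.indicator_of_notMem (show ω ∉ {ω | ∀ i < n, X i ω ≤ k} from h)]
      push_neg at h
      obtain ⟨i, hi, hik⟩ := h
      refine Finset.prod_eq_zero (Finset.mem_range.mpr hi) ?_
      simp [hg, hik]
  have hint : ∫ ω, ∏ i ∈ Finset.range n, g i (X i ω)
      = (ℙ {ω | ∀ i < n, X i ω ≤ k}).toReal := by
    rw [show (fun ω => ∏ i ∈ Finset.range n, g i (X i ω))
        = Set.indicator {ω | ∀ i < n, X i ω ≤ k} (fun _ => (1:ℝ)) from funext hptwise]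
    rw [integral_indicator_const _ hms]
    simp [Measure.real]
  rw [← hint, aux_integral_prod_comp' X hmeas hindep g hgm hgnn n]
  have : ∀ i ∈ Finset.range n, ∫ ω, g i (X i ω) = q := by
    intro i _
    have : (∫ ω, g i (X i ω)) = (ℙ {ω | X i ω ≤ k}).toReal := by
      have hs : MeasurableSet {ω | X i ω ≤ k} := (hmeas i) measurableSet_Iic
      rw [show (fun ω => g i (X i ω))
          = Set.indicator {ω | X i ω ≤ k} (fun _ => (1:ℝ)) from by
        funext ω; simp [hg, Set.indicator_apply]]
      rw [integral_indicator_const _ hs]; simp [Measure.real]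
    rw [this, hq i]
  rw [Finset.prod_congr rfl this, Finset.prod_const, Finset.card_range]


end helpers


set_option maxHeartbeats 1000000 in
theorem stmt_3
    {Ω : Type*} [MeasureSpace Ω] [IsProbabilityMeasure (ℙ : Measure Ω)]
    (X : ℕ → Ω → ℝ) (hmeas : ∀ i, Measurable (X i)) (hnn : ∀ i ω, 0 ≤ X i ω)
    (hindep : iIndepFun X ℙ)
    (hident : ∀ i, IdentDistrib (X i) (X 0) ℙ ℙ)
    (c : ℝ) (hc : 0 < c)
    (htail : Tendsto (fun x : ℝ => (ℙ {ω | x < X 0 ω}).toReal / (c * x ^ (-(1 : ℝ))))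
      atTop (nhds 1)) :
    ∃ c' : ℝ, 0 < c' ∧ ∃ C' : ℝ, 0 < C' ∧ ∀ k : ℝ, 2 ≤ k → ∀ lam : ℝ, 1 ≤ lam →
      (ℙ {ω | ∃ n : ℕ, (∀ i < n, X i ω ≤ k) ∧
          lam * (k * Real.log k) ≤ ∑ i ∈ Finset.range n, X i ω}).toReal
        ≤ C' * Real.exp (-(c' * lam)) := by
  obtain ⟨k0, hk0, htb⟩ := aux_tail_bounds' X c hc htail
  have hlog2 : (0:ℝ) < Real.log 2 := Real.log_pos one_lt_two
  have hk0pos : (0:ℝ) < k0 := by linarith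
  set b : ℝ := c / k0 with hbdef
  set A : ℝ := (k0 + 4 * c) / Real.log 2 with hAdef
  have hbpos : 0 < b := div_pos hc hk0pos
  have hApos : 0 < A := div_pos (by linarith) hlog2
  set c' : ℝ := min (1/4) (A * (Real.log 2)^2 / b) * b / A with hc'def
  have hminpos : 0 < min (1/4) (A * (Real.log 2)^2 / b) := by
    apply lt_min (by norm_num)
    positivity
  have hc'pos : 0 < c' := by
    apply div_pos (mul_pos hminpos hbpos) hApos
  have hc'A : c' * A = min (1/4) (A * (Real.log 2)^2 / b) * b := by
    rw [hc'def, div_mul_cancel₀ _ hApos.ne']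
  have hc'b : c' * A ≤ b / 4 := by
    rw [hc'A]
    have h1 : min (1/4) (A * (Real.log 2)^2 / b) ≤ 1/4 := min_le_left _ _
    nlinarith
  have hc'log : c' ≤ (Real.log 2)^2 := by
    rw [hc'def, div_le_iff₀ hApos]
    have h1 : min (1/4) (A * (Real.log 2)^2 / b) ≤ A * (Real.log 2)^2 / b := min_le_right _ _
    have h2 : (A * (Real.log 2)^2 / b) * b = A * (Real.log 2)^2 := by field_simp
    nlinarith
  refine ⟨c', hc'pos, 2, two_pos, fun k hk lam hlam => ?_⟩
  have hkpos : (0:ℝ) < k := by linarith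
  have hlogk2 : Real.log 2 ≤ Real.log k := Real.log_le_log (by norm_num) hk
  have hlogkpos : 0 < Real.log k := lt_of_lt_of_le hlog2 hlogk2
  have hklogk : 0 < k * Real.log k := mul_pos hkpos hlogkpos
  set t : ℝ := c' / (k * Real.log k) with htdef
  set s : ℝ := lam * (k * Real.log k) with hsdef
  have ht : 0 < t := div_pos hc'pos hklogk
  have hspos : 0 < s := by positivity
  have hts : t * s = c' * lam := by
    rw [htdef, hsdef]; field_simp
  have htk : t * k ≤ Real.log 2 := by
    have h1 : t * k = c' / Real.log k := by
      rw [htdef]; field_simp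
    rw [h1]
    rw [div_le_iff₀ hlogkpos]
    calc c' ≤ (Real.log 2)^2 := hc'log
      _ ≤ Real.log 2 * Real.log k := by nlinarith
  set p : ℝ := (ℙ {ω | k < X 0 ω}).toReal with hpdef
  have hp1 : p ≤ 1 := by
    rw [hpdef]
    exact ENNReal.toReal_le_of_le_ofReal one_pos.le (by simp [prob_le_one])
  have hpb : b / k ≤ p := by
    rcases le_or_gt k0 k with hcase | hcase
    · have := (htb k hcase).1
      calc b / k = c / (k0 * k) := by rw [hbdef]; field_simp
        _ ≤ c / (2 * k) := by
            apply div_le_div_of_nonneg_left hc.le (by positivity) (by nlinarith)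
        _ ≤ p := this
    · have hsub : {ω | k0 < X 0 ω} ⊆ {ω | k < X 0 ω} := fun ω h => lt_trans hcase h
      have hmono : (ℙ {ω | k0 < X 0 ω}).toReal ≤ p :=
        ENNReal.toReal_mono (measure_ne_top _ _) (measure_mono hsub)
      have := (htb k0 le_rfl).1
      calc b / k = c / (k0 * k) := by rw [hbdef]; field_simp
        _ ≤ c / (2 * k0) := by
            apply div_le_div_of_nonneg_left hc.le (by positivity) (by nlinarith)
        _ ≤ (ℙ {ω | k0 < X 0 ω}).toReal := this
        _ ≤ p := hmono
  have hppos : 0 < p := lt_of_lt_of_le (div_pos hbpos hkpos) hpb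
  -- m
  set m : ℝ := ∫ ω, (if X 0 ω ≤ k then Real.exp (t * X 0 ω) else 0) with hmdef
  have hm0 : 0 ≤ m := by
    rw [hmdef]
    apply integral_nonneg
    intro ω
    by_cases h : X 0 ω ≤ k <;> simp [h, Real.exp_nonneg]
  have hMle := trunc_mean_le' (X 0) (hmeas 0) (hnn 0) c k0 hc hk0
    (fun x hx => (htb x hx).2) k hk
  have hMnn : 0 ≤ ∫ ω, (if X 0 ω ≤ k then X 0 ω else 0) := by
    apply integral_nonneg
    intro ω
    by_cases h : X 0 ω ≤ k <;> simp [h, hnn 0 ω]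
  have hm_le : m ≤ 1 - p / 2 := by
    have h1 := mgf_bound' (X 0) (hmeas 0) (hnn 0) k t ht htk (by linarith)
    rw [aux_prob_le_eq' (X 0) (hmeas 0) k, ← hpdef] at h1
    have h2 : 2 * t * ∫ ω, (if X 0 ω ≤ k then X 0 ω else 0)
        ≤ 2 * t * (A * Real.log k) := by
      apply mul_le_mul_of_nonneg_left ?_ (by positivity)
      rw [hAdef]
      calc ∫ ω, (if X 0 ω ≤ k then X 0 ω else 0)
          ≤ (k0 + 4 * c) / Real.log 2 * Real.log k := hMle
        _ = (k0 + 4 * c) / Real.log 2 * Real.log k := rfl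
    have h3 : 2 * t * (A * Real.log k) ≤ p / 2 := by
      have htval : t * Real.log k = c' / k := by
        rw [htdef]; field_simp
      have : 2 * t * (A * Real.log k) = 2 * A * (t * Real.log k) := by ring
      rw [this, htval]
      have : 2 * A * (c' / k) = 2 * (c' * A) / k := by ring
      rw [this]
      calc 2 * (c' * A) / k ≤ 2 * (b/4) / k :=
          (div_le_div_iff_of_pos_right hkpos).mpr (by linarith)
        _ = (b / k) / 2 := by ring
        _ ≤ p / 2 := by linarith
    rw [hmdef]
    calc (∫ ω, if X 0 ω ≤ k then Real.exp (t * X 0 ω) else 0)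
        ≤ (1 - p) + 2 * t * ∫ ω, (if X 0 ω ≤ k then X 0 ω else 0) := h1
      _ ≤ (1 - p) + p / 2 := by linarith
      _ = 1 - p / 2 := by ring
  have hmlt1 : m < 1 := by linarith [hppos]
  have h1m : p / 2 ≤ 1 - m := by linarith
  have h1mpos : 0 < 1 - m := by linarith [hppos]
  -- per-index identities
  have hmi : ∀ i, ∫ ω, (if X i ω ≤ k then Real.exp (t * X i ω) else 0) = m := by
    intro i
    rw [hmdef]
    have hgm : Measurable (fun x : ℝ => if x ≤ k then Real.exp (t * x) else 0) :=
      Measurable.ite measurableSet_Iic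
        (Real.measurable_exp.comp (measurable_id.const_mul t)) measurable_const
    exact ((hident i).comp hgm).integral_eq
  have hpi : ∀ i, (ℙ {ω | k < X i ω}).toReal = p := by
    intro i
    rw [hpdef]
    congr 1
    have h1 : {ω | k < X i ω} = X i ⁻¹' Set.Ioi k := rfl
    have h2 : {ω | k < X 0 ω} = X 0 ⁻¹' Set.Ioi k := rfl
    rw [h1, h2, ← Measure.map_apply (hmeas i) measurableSet_Ioi,
      ← Measure.map_apply (hmeas 0) measurableSet_Ioi, (hident i).map_eq]
  have hqi : ∀ i, (ℙ {ω | X i ω ≤ k}).toReal = 1 - p := by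
    intro i
    rw [aux_prob_le_eq' (X i) (hmeas i) k, hpi i]
  -- events
  set E : Set Ω := {ω | ∃ n : ℕ, (∀ i < n, X i ω ≤ k) ∧
      s ≤ ∑ i ∈ Finset.range n, X i ω} with hEdef
  set ev : ℕ → Set Ω := fun n => {ω | (∀ i < n, X i ω ≤ k) ∧
      s ≤ ∑ i ∈ Finset.range n, X i ω ∧ k < X n ω} with hevdef
  set B : Set Ω := {ω | ∀ i, X i ω ≤ k} with hBdef
  have hsubE : E ⊆ (⋃ n, ev n) ∪ B := by
    rintro ω ⟨n0, hbelow, hsum⟩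
    by_cases hall : ∀ i, X i ω ≤ k
    · exact Or.inr hall
    · left
      push_neg at hall
      have hex : ∃ i, k < X i ω := hall
      set n := Nat.find hex with hndef
      have hnlt : k < X n ω := Nat.find_spec hex
      have hnbelow : ∀ i < n, X i ω ≤ k := fun i hi =>
        not_lt.mp (Nat.find_min hex hi)
      have hn0n : n0 ≤ n := by
        by_contra hcon
        push_neg at hcon
        exact absurd (hbelow n hcon) (not_le.mpr hnlt)
      have hsummono : ∑ i ∈ Finset.range n0, X i ω ≤ ∑ i ∈ Finset.range n, X i ω := by
        apply Finset.sum_le_sum_of_subset_of_nonneg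
          (Finset.range_subset_range.mpr hn0n)
        intro i _ _
        exact hnn i ω
      exact Set.mem_iUnion.mpr ⟨n, hnbelow, le_trans hsum hsummono, hnlt⟩
  -- B has measure zero
  have hB0 : ℙ B = 0 := by
    have hle : ∀ n : ℕ, (ℙ B).toReal ≤ (1-p) ^ n := by
      intro n
      have hsub : B ⊆ {ω | ∀ i < n, X i ω ≤ k} := fun ω h i _ => h i
      calc (ℙ B).toReal ≤ (ℙ {ω | ∀ i < n, X i ω ≤ k}).toReal :=
          ENNReal.toReal_mono (measure_ne_top _ _) (measure_mono hsub)
        _ = (1-p) ^ n := aux_below_prob' X hmeas hindep k (1-p) hqi n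
    have htend : Tendsto (fun n : ℕ => (1-p) ^ n) atTop (nhds 0) :=
      tendsto_pow_atTop_nhds_zero_of_lt_one (by linarith) (by linarith)
    have h0 : (ℙ B).toReal ≤ 0 := ge_of_tendsto htend (Filter.Eventually.of_forall hle)
    have := le_antisymm h0 ENNReal.toReal_nonneg
    rcases (ENNReal.toReal_eq_zero_iff _).mp this with h | h
    · exact h
    · exact absurd h (measure_ne_top _ _)
  -- sum bound
  have hevbd : ∀ n : ℕ, ℙ (ev n) ≤
      ENNReal.ofReal (Real.exp (-(t*s)) * p * m ^ n) := by
    intro n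
    have := aux_event_bound' X hmeas hindep k t s m p ht htk hspos.le hmi hpi hm0 n
    calc ℙ (ev n) = ENNReal.ofReal ((ℙ (ev n)).toReal) :=
        (ENNReal.ofReal_toReal (measure_ne_top _ _)).symm
      _ ≤ ENNReal.ofReal (Real.exp (-(t*s)) * p * m ^ n) := by
          apply ENNReal.ofReal_le_ofReal
          calc (ℙ (ev n)).toReal ≤ Real.exp (-(t*s)) * (m ^ n * p) := this
            _ = Real.exp (-(t*s)) * p * m ^ n := by ring
  have hsummable : Summable (fun n : ℕ => Real.exp (-(t*s)) * p * m ^ n) :=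
    (summable_geometric_of_lt_one hm0 hmlt1).mul_left _
  have htsum : ∑' n : ℕ, (Real.exp (-(t*s)) * p * m ^ n)
      = Real.exp (-(t*s)) * p * (1 - m)⁻¹ := by
    rw [tsum_mul_left, tsum_geometric_of_lt_one hm0 hmlt1]
  have hEbound : ℙ E ≤ ENNReal.ofReal (Real.exp (-(t*s)) * p * (1 - m)⁻¹) := by
    calc ℙ E ≤ ℙ ((⋃ n, ev n) ∪ B) := measure_mono hsubE
      _ ≤ ℙ (⋃ n, ev n) + ℙ B := measure_union_le _ _
      _ = ℙ (⋃ n, ev n) := by rw [hB0, add_zero]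
      _ ≤ ∑' n, ℙ (ev n) := measure_iUnion_le _
      _ ≤ ∑' n, ENNReal.ofReal (Real.exp (-(t*s)) * p * m ^ n) :=
          ENNReal.tsum_le_tsum hevbd
      _ = ENNReal.ofReal (∑' n : ℕ, Real.exp (-(t*s)) * p * m ^ n) :=
          (ENNReal.ofReal_tsum_of_nonneg (fun n => by positivity) hsummable).symm
      _ = ENNReal.ofReal (Real.exp (-(t*s)) * p * (1 - m)⁻¹) := by rw [htsum]
  have hfinal : Real.exp (-(t*s)) * p * (1 - m)⁻¹ ≤ 2 * Real.exp (-(t*s)) := by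
    have hinv : (1 - m)⁻¹ ≤ 2 / p := by
      have := inv_anti₀ (half_pos hppos) h1m
      calc (1 - m)⁻¹ ≤ (p / 2)⁻¹ := this
        _ = 2 / p := by rw [inv_div]
    calc Real.exp (-(t*s)) * p * (1 - m)⁻¹
        ≤ Real.exp (-(t*s)) * p * (2 / p) := by
          apply mul_le_mul_of_nonneg_left hinv (by positivity)
      _ = 2 * Real.exp (-(t*s)) := by field_simp
  calc (ℙ E).toReal ≤ (ENNReal.ofReal (Real.exp (-(t*s)) * p * (1 - m)⁻¹)).toReal :=
      ENNReal.toReal_mono ENNReal.ofReal_ne_top hEbound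
    _ = Real.exp (-(t*s)) * p * (1 - m)⁻¹ := ENNReal.toReal_ofReal (by positivity)
    _ ≤ 2 * Real.exp (-(t*s)) := hfinal
    _ = 2 * Real.exp (-(c' * lam)) := by rw [hts]
end

section
/- Let (X_i)_{i≥1} be nonnegative i.i.d. random variables with P(X_1 ≥ x) ~ c·x^{-1} as x → ∞ for some c > 0, and let S_n = Σ_{i=1}^n X_i. Then there exists a constant C' < ∞ such that for all n ≥ 2 and all λ ≥ 1, P(S_n ≥ λ·n·log n) ≤ C'·λ^{-1}. -/
open MeasureTheory ProbabilityTheory Filter Real Set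

-- split lemma
lemma aux_split {Ω : Type*} [MeasureSpace Ω] [IsProbabilityMeasure (ℙ : Measure Ω)]
    (f : ℝ → Set Ω) {b K : ℝ} (hK : 0 < K) (g : ℝ → ENNReal)
    (h2 : ∀ s ∈ Set.Ioc K b, (ℙ (f s) : ENNReal) ≤ g s) :
    ∫⁻ s in Set.Ioc (0:ℝ) b, ℙ (f s) ≤ ENNReal.ofReal K + ∫⁻ s in Set.Ioc K b, g s := by
  by_cases hbK : b ≤ K
  · calc ∫⁻ s in Set.Ioc (0:ℝ) b, ℙ (f s) ≤ ∫⁻ _ in Set.Ioc (0:ℝ) b, 1 :=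
          setLIntegral_mono' measurableSet_Ioc (fun s _ => prob_le_one)
      _ = volume (Set.Ioc (0:ℝ) b) := setLIntegral_one _
      _ ≤ ENNReal.ofReal K := by
          rw [Real.volume_Ioc]
          exact ENNReal.ofReal_le_ofReal (by linarith)
      _ ≤ _ := le_self_add
  · push_neg at hbK
    have hsplit : Set.Ioc (0:ℝ) b = Set.Ioc (0:ℝ) K ∪ Set.Ioc K b :=
      (Set.Ioc_union_Ioc_eq_Ioc hK.le hbK.le).symm
    rw [hsplit, lintegral_union measurableSet_Ioc (Set.Ioc_disjoint_Ioc_of_le le_rfl)]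
    refine add_le_add ?_ ?_
    · calc ∫⁻ s in Set.Ioc (0:ℝ) K, ℙ (f s) ≤ ∫⁻ _ in Set.Ioc (0:ℝ) K, 1 :=
            setLIntegral_mono' measurableSet_Ioc (fun s _ => prob_le_one)
        _ = volume (Set.Ioc (0:ℝ) K) := setLIntegral_one _
        _ ≤ ENNReal.ofReal K := by rw [Real.volume_Ioc]; simp
    · exact setLIntegral_mono' measurableSet_Ioc h2

lemma aux_layercake {Ω : Type*} [MeasureSpace Ω] [IsProbabilityMeasure (ℙ : Measure Ω)]
    (W : Ω → ℝ) (hW : Measurable W) (hWnn : ∀ ω, 0 ≤ W ω) {b : ℝ} (hb : 0 < b) :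
    ∫⁻ ω, ENNReal.ofReal (min (W ω) b) ∂ℙ ≤ ∫⁻ s in Set.Ioc (0:ℝ) b, ℙ {ω | s ≤ W ω} := by
  rw [lintegral_eq_lintegral_meas_le ℙ (Filter.Eventually.of_forall fun ω => le_min (hWnn ω) hb.le)
    ((hW.min measurable_const).aemeasurable)]
  have hmono : ∫⁻ s in Set.Ioi (0:ℝ), ℙ {ω | s ≤ min (W ω) b}
      ≤ ∫⁻ s in Set.Ioi (0:ℝ), (Set.Ioc (0:ℝ) b).indicator (fun s => ℙ {ω | s ≤ W ω}) s := by
    refine setLIntegral_mono' measurableSet_Ioi (fun s hs => ?_)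
    by_cases hsb : s ≤ b
    · rw [Set.indicator_of_mem (Set.mem_Ioc.2 ⟨hs, hsb⟩)]
      exact measure_mono (fun ω (hω : s ≤ min (W ω) b) => (le_trans hω (min_le_left _ _) : s ≤ W ω))
    · push_neg at hsb
      have : {ω | s ≤ min (W ω) b} = ∅ := by
        ext ω; simp only [Set.mem_setOf_eq, Set.mem_empty_iff_false, iff_false, not_le]
        exact lt_of_le_of_lt (min_le_right _ _) hsb
      rw [this, measure_empty]
      exact zero_le
  refine hmono.trans (le_of_eq ?_)
  rw [lintegral_indicator measurableSet_Ioc, Measure.restrict_restrict measurableSet_Ioc,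
    Set.inter_eq_left.mpr Set.Ioc_subset_Ioi_self]

lemma aux_int_inv {K t : ℝ} (hK : 1 ≤ K) (ht : 1 ≤ t) :
    ∫⁻ s in Set.Ioc K t, ENNReal.ofReal (K * s⁻¹) ≤ ENNReal.ofReal (K * Real.log t) := by
  have hK0 : (0:ℝ) < K := by linarith
  have ht0 : (0:ℝ) < t := by linarith
  by_cases hKt : t ≤ K
  · rw [Set.Ioc_eq_empty (by exact not_lt.2 hKt), Measure.restrict_empty, lintegral_zero_measure]
    exact zero_le
  · push_neg at hKt
    have hint : IntegrableOn (fun s : ℝ => K * s⁻¹) (Set.Ioc K t) := by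
      refine (ContinuousOn.integrableOn_Icc ?_).mono_set Set.Ioc_subset_Icc_self
      exact continuousOn_const.mul (continuousOn_id.inv₀ fun x hx =>
        ne_of_gt (lt_of_lt_of_le hK0 hx.1))
    rw [← ofReal_integral_eq_lintegral_ofReal hint ((ae_restrict_iff' measurableSet_Ioc).2
      (Filter.Eventually.of_forall fun s hs => by
        have hs0 : (0:ℝ) < s := lt_trans hK0 hs.1
        positivity))]
    refine ENNReal.ofReal_le_ofReal ?_
    rw [← intervalIntegral.integral_of_le hKt.le, intervalIntegral.integral_const_mul,
      integral_inv_of_pos hK0 ht0]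
    have h1 : Real.log (t / K) ≤ Real.log t := by
      apply Real.log_le_log (by positivity)
      exact div_le_self ht0.le hK
    nlinarith [Real.log_nonneg ht]

lemma aux_int_rpow {K t : ℝ} (hK : 1 ≤ K) (ht : 1 ≤ t) :
    ∫⁻ s in Set.Ioc (K^2) (t^2), ENNReal.ofReal (K * s ^ (-(1/2) : ℝ))
      ≤ ENNReal.ofReal (2 * K * t) := by
  have hK0 : (0:ℝ) < K := by linarith
  have ht0 : (0:ℝ) < t := by linarith
  by_cases hKt : t^2 ≤ K^2
  · rw [Set.Ioc_eq_empty (by exact not_lt.2 hKt), Measure.restrict_empty, lintegral_zero_measure]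
    exact zero_le
  · push_neg at hKt
    have hsq : ∀ x : ℝ, 0 ≤ x → (x^2) ^ ((1:ℝ)/2) = x := fun x hx => by
      rw [← Real.sqrt_eq_rpow]; exact Real.sqrt_sq hx
    have hint : IntegrableOn (fun s : ℝ => K * s ^ (-(1/2) : ℝ)) (Set.Ioc (K^2) (t^2)) := by
      refine (ContinuousOn.integrableOn_Icc ?_).mono_set Set.Ioc_subset_Icc_self
      exact continuousOn_const.mul (continuousOn_id.rpow_const fun x hx =>
        Or.inl (ne_of_gt (lt_of_lt_of_le (by positivity) hx.1)))
    rw [← ofReal_integral_eq_lintegral_ofReal hint ((ae_restrict_iff' measurableSet_Ioc).2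
      (Filter.Eventually.of_forall fun s hs => by
        have hs0 : (0:ℝ) < s := lt_of_le_of_lt (by positivity) hs.1
        positivity))]
    refine ENNReal.ofReal_le_ofReal ?_
    rw [← intervalIntegral.integral_of_le hKt.le, intervalIntegral.integral_const_mul,
      integral_rpow (Or.inl (by norm_num))]
    have he : (-(1/2) : ℝ) + 1 = 1/2 := by norm_num
    rw [he, hsq t ht0.le, hsq K hK0.le]
    nlinarith

set_option maxHeartbeats 1000000 in
lemma aux_arith {K lam L ν P : ℝ} (hK : 1 ≤ K) (hlam : 1 ≤ lam) (hL : (1:ℝ)/2 ≤ L)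
    (hν : 2 ≤ ν) (hP1 : 1 ≤ P) (hP : P ≤ 1 + 2*Real.sqrt lam + 2*L) :
    ν*K/(lam*(ν*L)) + (ν*(K^2 + 2*K*(lam*(ν*L))) + ν^2*(K*P)^2)/(lam*(ν*L))^2
      ≤ 80*K^2/lam := by
  set s := Real.sqrt lam with hs
  have hs1 : 1 ≤ s := by
    rw [hs, show (1:ℝ) = Real.sqrt 1 by simp]
    exact Real.sqrt_le_sqrt hlam
  have hs2 : s^2 = lam := Real.sq_sqrt (by linarith)
  have hlam0 : (0:ℝ) < lam := by linarith
  have hL0 : (0:ℝ) < L := by linarith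
  have hν0 : (0:ℝ) < ν := by linarith
  have hK0 : (0:ℝ) < K := by linarith
  have hνL : 1 ≤ ν * L := by nlinarith [mul_nonneg (by linarith : (0:ℝ) ≤ ν - 2) hL0.le]
  set t := lam*(ν*L) with hts
  have ht1 : 1 ≤ t := by
    nlinarith [mul_nonneg (by linarith : (0:ℝ) ≤ lam - 1) (by linarith : (0:ℝ) ≤ ν*L)]
  have ht0 : (0:ℝ) < t := by linarith
  have h2KL : 1 ≤ 2*K*L := by nlinarith [mul_nonneg (by linarith : (0:ℝ) ≤ K - 1) hL0.le]
  have hu : (1:ℝ)/2 ≤ s*L := by nlinarith [mul_nonneg (by linarith : (0:ℝ) ≤ s - 1) hL0.le]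
  -- term 1
  have T1 : ν*K/t ≤ 2*K^2/lam := by
    rw [div_le_div_iff₀ ht0 hlam0, hts]
    nlinarith [mul_nonneg (mul_nonneg (mul_nonneg hν0.le hK0.le) hlam0.le)
      (by linarith : (0:ℝ) ≤ 2*K*L - 1)]
  have h2lam : 1 ≤ 2*lam*ν*L^2 := by
    nlinarith [mul_nonneg (by linarith : (0:ℝ) ≤ ν - 2) (sq_nonneg L),
      mul_nonneg (by linarith : (0:ℝ) ≤ lam - 1) (mul_nonneg hν0.le (sq_nonneg L)),
      sq_nonneg (L - 1/2), sq_nonneg L]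
  have T2a : ν*K^2/t^2 ≤ 2*K^2/lam := by
    rw [div_le_div_iff₀ (by positivity) hlam0, hts]
    nlinarith [mul_nonneg (mul_nonneg (mul_nonneg hν0.le (sq_nonneg K)) hlam0.le)
      (by linarith : (0:ℝ) ≤ 2*lam*ν*L^2 - 1)]
  have T2b : ν*(2*K*t)/t^2 ≤ 4*K^2/lam := by
    have heq : ν*(2*K*t)/t^2 = 2*K*ν/t := by
      field_simp
    rw [heq, div_le_div_iff₀ ht0 hlam0, hts]
    nlinarith [mul_nonneg (mul_nonneg (mul_nonneg hν0.le hK0.le) hlam0.le)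
      (by linarith : (0:ℝ) ≤ 2*K*L - 1)]
  have hs2u : s ≤ 2*(s*L) := by nlinarith [mul_nonneg (by linarith : (0:ℝ) ≤ s) (by linarith : (0:ℝ) ≤ 2*L - 1)]
  have hLu : L ≤ s*L := by nlinarith [mul_nonneg (by linarith : (0:ℝ) ≤ s - 1) hL0.le]
  have key : (1 + 2*s + 2*L)^2 ≤ 72 * (s*L)^2 := by
    have h1 : 1 + 2*s + 2*L ≤ 8*(s*L) := by linarith
    have h2 : (1 + 2*s + 2*L)^2 ≤ (8*(s*L))^2 :=
      pow_le_pow_left₀ (by linarith) h1 2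
    nlinarith [sq_nonneg (s*L)]
  have hPfin : P^2 ≤ 72*lam*L^2 := by
    have hPsq : P^2 ≤ (1 + 2*s + 2*L)^2 := pow_le_pow_left₀ (by linarith) hP 2
    nlinarith
  have T2c : ν^2*(K*P)^2/t^2 ≤ 72*K^2/lam := by
    rw [div_le_div_iff₀ (by positivity) hlam0, hts]
    nlinarith [mul_nonneg (by positivity : (0:ℝ) ≤ ν^2*K^2*lam)
      (by linarith : (0:ℝ) ≤ 72*lam*L^2 - P^2)]
  have expand : (ν*(K^2 + 2*K*t) + ν^2*(K*P)^2)/t^2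
      = ν*K^2/t^2 + ν*(2*K*t)/t^2 + ν^2*(K*P)^2/t^2 := by ring
  calc ν*K/t + (ν*(K^2 + 2*K*t) + ν^2*(K*P)^2)/t^2
      = ν*K/t + (ν*K^2/t^2 + ν*(2*K*t)/t^2 + ν^2*(K*P)^2/t^2) := by rw [expand]
    _ ≤ 2*K^2/lam + (2*K^2/lam + 4*K^2/lam + 72*K^2/lam) := by linarith
    _ = 80*K^2/lam := by ring



set_option maxHeartbeats 1000000 in


open MeasureTheory ProbabilityTheory Filter Real

theorem stmt_5
    {Ω : Type*} [MeasureSpace Ω] [IsProbabilityMeasure (ℙ : Measure Ω)]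
    (X : ℕ → Ω → ℝ) (hmeas : ∀ i, Measurable (X i)) (hnn : ∀ i ω, 0 ≤ X i ω)
    (hindep : iIndepFun X ℙ)
    (hident : ∀ i, IdentDistrib (X i) (X 0) ℙ ℙ)
    (c : ℝ) (hc : 0 < c)
    (htail : Tendsto (fun x : ℝ => (ℙ {ω | x ≤ X 0 ω}).toReal / (c * x ^ (-(1 : ℝ))))
      atTop (nhds 1)) :
    ∃ C' : ℝ, ∀ n : ℕ, 2 ≤ n → ∀ lam : ℝ, 1 ≤ lam →
      (ℙ {ω | lam * ((n : ℝ) * Real.log n) ≤ ∑ i ∈ Finset.range n, X i ω}).toReal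
        ≤ C' * lam ^ (-(1 : ℝ)) := by
  obtain ⟨K, hK1, htK⟩ : ∃ K : ℝ, 1 ≤ K ∧
      ∀ x : ℝ, 0 < x → ℙ {ω | x ≤ X 0 ω} ≤ ENNReal.ofReal (K / x) := by
    have h2 : ∀ᶠ x in atTop, (ℙ {ω | x ≤ X 0 ω}).toReal / (c * x ^ (-(1:ℝ))) < 2 :=
      htail.eventually_lt_const (by norm_num)
    obtain ⟨x₀, hx₀⟩ := h2.exists_forall_of_atTop
    refine ⟨max x₀ 1 + 2*c, by nlinarith [le_max_right x₀ 1], fun x hx => ?_⟩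
    by_cases hxx : max x₀ 1 ≤ x
    · have hratio := hx₀ x (le_trans (le_max_left x₀ 1) hxx)
      have hx1 : (1:ℝ) ≤ x := le_trans (le_max_right x₀ 1) hxx
      have hpow : x ^ (-(1:ℝ)) = x⁻¹ := Real.rpow_neg_one x
      have hcx : 0 < c * x⁻¹ := by positivity
      rw [hpow] at hratio
      have htr : (ℙ {ω | x ≤ X 0 ω}).toReal ≤ 2 * c / x := by
        rw [div_lt_iff₀ hcx] at hratio
        rw [div_eq_mul_inv]
        nlinarith
      calc ℙ {ω | x ≤ X 0 ω} = ENNReal.ofReal ((ℙ {ω | x ≤ X 0 ω}).toReal) :=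
            (ENNReal.ofReal_toReal (measure_ne_top _ _)).symm
        _ ≤ ENNReal.ofReal ((max x₀ 1 + 2*c) / x) := by
            refine ENNReal.ofReal_le_ofReal (htr.trans ?_)
            have : 0 < max x₀ 1 := lt_of_lt_of_le one_pos (le_max_right x₀ 1)
            rw [div_le_div_iff₀ hx hx]
            nlinarith
    · push_neg at hxx
      calc ℙ {ω | x ≤ X 0 ω} ≤ 1 := prob_le_one
        _ = ENNReal.ofReal 1 := by simp
        _ ≤ ENNReal.ofReal ((max x₀ 1 + 2*c) / x) := by
            refine ENNReal.ofReal_le_ofReal ?_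
            rw [le_div_iff₀ hx]
            nlinarith
  have hK0 : (0:ℝ) < K := by linarith
  refine ⟨80*K^2, fun n hn lam hlam => ?_⟩
  -- basic quantities
  set L : ℝ := Real.log n with hLdef
  have hν : (2:ℝ) ≤ (n:ℝ) := by exact_mod_cast hn
  have hν0 : (0:ℝ) < (n:ℝ) := by linarith
  have hL : (1:ℝ)/2 ≤ L := by
    have h2 : Real.log 2 ≤ L := Real.log_le_log (by norm_num) hν
    nlinarith [Real.log_two_gt_d9]
  have hL0 : (0:ℝ) < L := by linarith
  have hlam0 : (0:ℝ) < lam := by linarith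
  set t : ℝ := lam * ((n:ℝ) * L) with htdef
  have ht1 : (1:ℝ) ≤ t := by
    have hνL : 1 ≤ (n:ℝ) * L := by
      nlinarith [mul_nonneg (by linarith : (0:ℝ) ≤ (n:ℝ) - 2) hL0.le]
    nlinarith [mul_nonneg (by linarith : (0:ℝ) ≤ lam - 1) (by linarith : (0:ℝ) ≤ (n:ℝ)*L)]
  have ht0 : (0:ℝ) < t := by linarith
  have hlogt0 : 0 ≤ Real.log t := Real.log_nonneg ht1
  -- truncated variables
  set g : ℕ → Ω → ENNReal := fun i ω => ENNReal.ofReal (min (X i ω) t) with hgdef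
  have mφ : Measurable (fun x : ℝ => ENNReal.ofReal (min x t)) :=
    ENNReal.measurable_ofReal.comp (measurable_id.min measurable_const)
  have hgm : ∀ i, Measurable (g i) := fun i => mφ.comp (hmeas i)
  have identg : ∀ i, IdentDistrib (g i) (g 0) ℙ ℙ := fun i => (hident i).comp mφ
  set M₁ : ENNReal := ∫⁻ ω, g 0 ω ∂ℙ with hM1def
  set M₂ : ENNReal := ∫⁻ ω, (g 0 ω)^2 ∂ℙ with hM2def
  -- event inclusion
  have hsub : {ω | t ≤ ∑ i ∈ Finset.range n, X i ω} ⊆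
      (⋃ i ∈ Finset.range n, {ω | t ≤ X i ω}) ∪
      {ω | t ≤ ∑ i ∈ Finset.range n, min (X i ω) t} := by
    intro ω hω
    by_cases hbig : ∃ i ∈ Finset.range n, t ≤ X i ω
    · obtain ⟨i, hi, hti⟩ := hbig
      exact Or.inl (Set.mem_biUnion hi hti)
    · push_neg at hbig
      refine Or.inr ?_
      have hemin : ∀ i ∈ Finset.range n, min (X i ω) t = X i ω :=
        fun i hi => min_eq_left (hbig i hi).le
      show t ≤ ∑ i ∈ Finset.range n, min (X i ω) t
      rw [Finset.sum_congr rfl hemin]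
      exact hω
  -- first term bound
  have hterm1 : ℙ (⋃ i ∈ Finset.range n, {ω | t ≤ X i ω})
      ≤ ENNReal.ofReal ((n:ℝ)*K/t) := by
    calc ℙ (⋃ i ∈ Finset.range n, {ω | t ≤ X i ω})
        ≤ ∑ i ∈ Finset.range n, ℙ {ω | t ≤ X i ω} := measure_biUnion_finset_le _ _
      _ = ∑ _i ∈ Finset.range n, ℙ {ω | t ≤ X 0 ω} := by
          refine Finset.sum_congr rfl (fun i _ => ?_)
          exact (hident i).measure_mem_eq measurableSet_Ici
      _ = (n : ENNReal) * ℙ {ω | t ≤ X 0 ω} := by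
          rw [Finset.sum_const, Finset.card_range, nsmul_eq_mul]
      _ ≤ (n : ENNReal) * ENNReal.ofReal (K/t) := by
          exact mul_le_mul_right (htK t ht0) _
      _ = ENNReal.ofReal ((n:ℝ)*K/t) := by
          rw [← ENNReal.ofReal_natCast n, ← ENNReal.ofReal_mul (by positivity)]
          ring_nf
  -- Markov bound
  have hmarkov : ℙ {ω | t ≤ ∑ i ∈ Finset.range n, min (X i ω) t}
      ≤ (∫⁻ ω, (∑ i ∈ Finset.range n, g i ω)^2 ∂ℙ) / (ENNReal.ofReal t)^2 := by
    have hS : Measurable (fun ω => (∑ i ∈ Finset.range n, g i ω)^2) :=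
      (Finset.measurable_sum _ (fun i _ => hgm i)).pow_const 2
    have hsub2 : {ω | t ≤ ∑ i ∈ Finset.range n, min (X i ω) t} ⊆
        {ω | (ENNReal.ofReal t)^2 ≤ (∑ i ∈ Finset.range n, g i ω)^2} := by
      intro ω hω
      have h1 : ENNReal.ofReal t ≤ ENNReal.ofReal (∑ i ∈ Finset.range n, min (X i ω) t) :=
        ENNReal.ofReal_le_ofReal hω
      have h2 : ENNReal.ofReal (∑ i ∈ Finset.range n, min (X i ω) t)
          = ∑ i ∈ Finset.range n, g i ω :=
        ENNReal.ofReal_sum_of_nonneg (fun i _ => le_min (hnn i ω) ht0.le)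
      rw [h2] at h1
      exact pow_le_pow_left' h1 2
    have hne0 : (ENNReal.ofReal t)^2 ≠ 0 := pow_ne_zero _ (by simp [ENNReal.ofReal_eq_zero]; linarith)
    have hnetop : (ENNReal.ofReal t)^2 ≠ ⊤ := by
      exact ENNReal.pow_ne_top ENNReal.ofReal_ne_top
    calc ℙ {ω | t ≤ ∑ i ∈ Finset.range n, min (X i ω) t}
        ≤ ℙ {ω | (ENNReal.ofReal t)^2 ≤ (∑ i ∈ Finset.range n, g i ω)^2} :=
          measure_mono hsub2
      _ ≤ (∫⁻ ω, (∑ i ∈ Finset.range n, g i ω)^2 ∂ℙ) / (ENNReal.ofReal t)^2 := by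
          rw [ENNReal.le_div_iff_mul_le (Or.inl hne0) (Or.inl hnetop), mul_comm]
          exact mul_meas_ge_le_lintegral hS _

  -- second moment expansion
  have hexp : (∫⁻ ω, (∑ i ∈ Finset.range n, g i ω)^2 ∂ℙ)
      ≤ (n : ENNReal) * M₂ + (n : ENNReal)^2 * (M₁ * M₁) := by
    have hpt : ∀ ω, (∑ i ∈ Finset.range n, g i ω)^2
        = ∑ i ∈ Finset.range n, ∑ j ∈ Finset.range n, g i ω * g j ω := fun ω => by
      rw [sq, Finset.sum_mul_sum]
    rw [lintegral_congr hpt]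
    rw [lintegral_finset_sum _ (fun i _ => Finset.measurable_sum (f := fun j ω => g i ω * g j ω) _ (fun j _ => (hgm i).mul (hgm j)))]
    have hswap : ∀ i ∈ Finset.range n,
        ∫⁻ ω, (∑ j ∈ Finset.range n, g i ω * g j ω) ∂ℙ
          = ∑ j ∈ Finset.range n, ∫⁻ ω, g i ω * g j ω ∂ℙ :=
      fun i _ => lintegral_finset_sum _ (fun j _ => (hgm i).mul (hgm j))
    rw [Finset.sum_congr rfl hswap]
    have hdiag : ∀ i, ∫⁻ ω, g i ω * g i ω ∂ℙ = M₂ := by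
      intro i
      have hid : IdentDistrib (fun ω => g i ω * g i ω) (fun ω => g 0 ω * g 0 ω) ℙ ℙ :=
        (identg i).comp (measurable_id.mul measurable_id)
      rw [hid.lintegral_eq, hM2def]
      congr 1
      ext ω
      rw [sq]
    have hoff : ∀ i j, i ≠ j → ∫⁻ ω, g i ω * g j ω ∂ℙ = M₁ * M₁ := by
      intro i j hij
      rw [lintegral_mul_eq_lintegral_mul_lintegral_of_indepFun'' (hgm i).aemeasurable
        (hgm j).aemeasurable ((hindep.indepFun hij).comp mφ mφ),
        (identg i).lintegral_eq, (identg j).lintegral_eq]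
    have hbound : ∀ i ∈ Finset.range n,
        ∑ j ∈ Finset.range n, ∫⁻ ω, g i ω * g j ω ∂ℙ ≤ M₂ + (n : ENNReal) * (M₁ * M₁) := by
      intro i hi
      have hterm : ∀ j ∈ Finset.range n, ∫⁻ ω, g i ω * g j ω ∂ℙ
          ≤ (if i = j then M₂ else 0) + M₁ * M₁ := by
        intro j _
        by_cases hij : i = j
        · subst hij
          rw [hdiag i, if_pos rfl]
          exact le_self_add
        · rw [hoff i j hij, if_neg hij]
          exact (zero_add (M₁ * M₁)).symm.le
      calc ∑ j ∈ Finset.range n, ∫⁻ ω, g i ω * g j ω ∂ℙ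
          ≤ ∑ j ∈ Finset.range n, ((if i = j then M₂ else 0) + M₁ * M₁) :=
            Finset.sum_le_sum hterm
        _ = (∑ j ∈ Finset.range n, if i = j then M₂ else 0)
            + ∑ _j ∈ Finset.range n, M₁ * M₁ := Finset.sum_add_distrib
        _ ≤ M₂ + (n : ENNReal) * (M₁ * M₁) := by
            rw [Finset.sum_ite_eq, if_pos hi, Finset.sum_const, Finset.card_range,
              nsmul_eq_mul]
    calc ∑ i ∈ Finset.range n, ∑ j ∈ Finset.range n, ∫⁻ ω, g i ω * g j ω ∂ℙ
        ≤ ∑ _i ∈ Finset.range n, (M₂ + (n : ENNReal) * (M₁ * M₁)) :=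
          Finset.sum_le_sum hbound
      _ = (n : ENNReal) * (M₂ + (n : ENNReal) * (M₁ * M₁)) := by
          rw [Finset.sum_const, Finset.card_range, nsmul_eq_mul]
      _ = (n : ENNReal) * M₂ + (n : ENNReal)^2 * (M₁ * M₁) := by ring

  -- moment bounds
  have hM1 : M₁ ≤ ENNReal.ofReal (K*(1 + Real.log t)) := by
    calc M₁ ≤ ∫⁻ s in Set.Ioc (0:ℝ) t, ℙ {ω | s ≤ X 0 ω} :=
          aux_layercake (X 0) (hmeas 0) (hnn 0) ht0
      _ ≤ ENNReal.ofReal K + ∫⁻ s in Set.Ioc K t, ENNReal.ofReal (K * s⁻¹) := by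
          refine aux_split _ hK0 _ (fun s hs => ?_)
          have hs0 : (0:ℝ) < s := lt_trans hK0 hs.1
          refine (htK s hs0).trans (le_of_eq ?_)
          rw [div_eq_mul_inv]
      _ ≤ ENNReal.ofReal K + ENNReal.ofReal (K * Real.log t) :=
          add_le_add_right (aux_int_inv hK1 ht1) _
      _ = ENNReal.ofReal (K*(1 + Real.log t)) := by
          rw [← ENNReal.ofReal_add hK0.le (by positivity)]
          ring_nf
  have hM2 : M₂ ≤ ENNReal.ofReal (K^2 + 2*K*t) := by
    have hminsq : ∀ ω, (g 0 ω)^2 = ENNReal.ofReal (min ((X 0 ω)^2) (t^2)) := by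
      intro ω
      have h1 : (min (X 0 ω) t)^2 = min ((X 0 ω)^2) (t^2) := by
        rcases le_total (X 0 ω) t with h | h
        · rw [min_eq_left h, min_eq_left (by nlinarith [hnn 0 ω])]
        · rw [min_eq_right h, min_eq_right (by nlinarith [hnn 0 ω])]
      rw [hgdef]
      dsimp only
      rw [← ENNReal.ofReal_pow (le_min (hnn 0 ω) ht0.le), h1]
    calc M₂ = ∫⁻ ω, ENNReal.ofReal (min ((X 0 ω)^2) (t^2)) ∂ℙ := lintegral_congr hminsq
      _ ≤ ∫⁻ s in Set.Ioc (0:ℝ) (t^2), ℙ {ω | s ≤ (X 0 ω)^2} :=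
          aux_layercake (fun ω => (X 0 ω)^2) ((hmeas 0).pow_const 2)
            (fun ω => sq_nonneg _) (by positivity)
      _ ≤ ENNReal.ofReal (K^2) + ∫⁻ s in Set.Ioc (K^2) (t^2),
            ENNReal.ofReal (K * s ^ (-(1/2) : ℝ)) := by
          refine aux_split _ (by positivity) _ (fun s hs => ?_)
          have hs0 : (0:ℝ) < s := lt_trans (by positivity) hs.1
          have hsqs : (0:ℝ) < Real.sqrt s := Real.sqrt_pos.2 hs0
          have hsubset : {ω | s ≤ (X 0 ω)^2} ⊆ {ω | Real.sqrt s ≤ X 0 ω} := by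
            intro ω (hω : s ≤ (X 0 ω)^2)
            have := Real.sqrt_le_sqrt hω
            rwa [Real.sqrt_sq (hnn 0 ω)] at this
          refine le_trans (measure_mono hsubset) ((htK _ hsqs).trans (le_of_eq ?_))
          rw [Real.sqrt_eq_rpow, div_eq_mul_inv, ← Real.rpow_neg hs0.le]
      _ ≤ ENNReal.ofReal (K^2) + ENNReal.ofReal (2*K*t) :=
          add_le_add_right (aux_int_rpow hK1 ht1) _
      _ = ENNReal.ofReal (K^2 + 2*K*t) := by
          rw [← ENNReal.ofReal_add (by positivity) (by positivity)]
  -- combine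
  set A : ℝ := (n:ℝ)*(K^2 + 2*K*t) + (n:ℝ)^2*(K*(1 + Real.log t))^2 with hAdef
  have hcomb : ℙ {ω | t ≤ ∑ i ∈ Finset.range n, X i ω}
      ≤ ENNReal.ofReal ((n:ℝ)*K/t + A/t^2) := by
    have hA1 : (∫⁻ ω, (∑ i ∈ Finset.range n, g i ω)^2 ∂ℙ) ≤ ENNReal.ofReal A := by
      refine hexp.trans ?_
      have e1 : (n : ENNReal) * M₂ ≤ ENNReal.ofReal ((n:ℝ)*(K^2 + 2*K*t)) := by
        rw [ENNReal.ofReal_mul (by positivity : (0:ℝ) ≤ (n:ℝ)), ENNReal.ofReal_natCast]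
        exact mul_le_mul_right hM2 _
      have e2 : (n : ENNReal)^2 * (M₁ * M₁)
          ≤ ENNReal.ofReal ((n:ℝ)^2*(K*(1 + Real.log t))^2) := by
        have h2 : M₁ * M₁ ≤ ENNReal.ofReal (K*(1 + Real.log t)) *
            ENNReal.ofReal (K*(1 + Real.log t)) := mul_le_mul' hM1 hM1
        calc (n : ENNReal)^2 * (M₁ * M₁)
            ≤ (n : ENNReal)^2 * (ENNReal.ofReal (K*(1 + Real.log t)) *
              ENNReal.ofReal (K*(1 + Real.log t))) := mul_le_mul_right h2 _
          _ = ENNReal.ofReal ((n:ℝ)^2*(K*(1 + Real.log t))^2) := by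
              rw [← ENNReal.ofReal_mul (by positivity), ← ENNReal.ofReal_natCast n,
                ← ENNReal.ofReal_pow (by positivity), ← ENNReal.ofReal_mul (by positivity)]
              ring_nf
      calc (n : ENNReal) * M₂ + (n : ENNReal)^2 * (M₁ * M₁)
          ≤ ENNReal.ofReal ((n:ℝ)*(K^2 + 2*K*t))
            + ENNReal.ofReal ((n:ℝ)^2*(K*(1 + Real.log t))^2) := add_le_add e1 e2
        _ = ENNReal.ofReal A := by
            rw [← ENNReal.ofReal_add (by positivity) (by positivity), hAdef]
    have hB : (∫⁻ ω, (∑ i ∈ Finset.range n, g i ω)^2 ∂ℙ) / (ENNReal.ofReal t)^2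
        ≤ ENNReal.ofReal (A/t^2) := by
      calc (∫⁻ ω, (∑ i ∈ Finset.range n, g i ω)^2 ∂ℙ) / (ENNReal.ofReal t)^2
          ≤ ENNReal.ofReal A / (ENNReal.ofReal t)^2 := ENNReal.div_le_div_right hA1 _
        _ = ENNReal.ofReal (A/t^2) := by
            rw [← ENNReal.ofReal_pow ht0.le, ← ENNReal.ofReal_div_of_pos (by positivity)]
    calc ℙ {ω | t ≤ ∑ i ∈ Finset.range n, X i ω}
        ≤ ℙ ((⋃ i ∈ Finset.range n, {ω | t ≤ X i ω}) ∪
            {ω | t ≤ ∑ i ∈ Finset.range n, min (X i ω) t}) := measure_mono hsub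
      _ ≤ ℙ (⋃ i ∈ Finset.range n, {ω | t ≤ X i ω})
          + ℙ {ω | t ≤ ∑ i ∈ Finset.range n, min (X i ω) t} := measure_union_le _ _
      _ ≤ ENNReal.ofReal ((n:ℝ)*K/t) + ENNReal.ofReal (A/t^2) :=
          add_le_add hterm1 (hmarkov.trans hB)
      _ = ENNReal.ofReal ((n:ℝ)*K/t + A/t^2) :=
          (ENNReal.ofReal_add (by positivity) (by positivity)).symm
  -- final arithmetic
  have harith : (n:ℝ)*K/t + A/t^2 ≤ 80*K^2/lam := by
    have hsqrt : Real.log lam ≤ 2 * Real.sqrt lam := by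
      have h1 : Real.log (Real.sqrt lam) ≤ Real.sqrt lam - 1 :=
        Real.log_le_sub_one_of_pos (Real.sqrt_pos.2 hlam0)
      have h2 : Real.log (Real.sqrt lam) = Real.log lam / 2 := Real.log_sqrt hlam0.le
      nlinarith
    have hlogL : Real.log L ≤ L := by
      nlinarith [Real.log_le_sub_one_of_pos hL0]
    have hlogn : Real.log (n:ℝ) = L := hLdef.symm
    have hlogt : Real.log t = Real.log lam + (Real.log (n:ℝ) + Real.log L) := by
      rw [htdef, Real.log_mul (ne_of_gt hlam0) (ne_of_gt (by positivity)),
        Real.log_mul (ne_of_gt hν0) (ne_of_gt hL0)]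
    have hP : 1 + Real.log t ≤ 1 + 2*Real.sqrt lam + 2*L := by
      rw [hlogt, hlogn]; linarith
    have := aux_arith (K := K) (lam := lam) (L := L) (ν := (n:ℝ)) (P := 1 + Real.log t)
      hK1 hlam hL hν (by linarith) hP
    rw [hAdef, htdef]
    convert this using 2 <;> ring
  -- finish
  have hfin : (ℙ {ω | t ≤ ∑ i ∈ Finset.range n, X i ω}).toReal ≤ 80*K^2/lam :=
    le_trans (ENNReal.toReal_le_of_le_ofReal (by positivity) hcomb)
      harith
  calc (ℙ {ω | lam * ((n : ℝ) * Real.log n) ≤ ∑ i ∈ Finset.range n, X i ω}).toReal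
      = (ℙ {ω | t ≤ ∑ i ∈ Finset.range n, X i ω}).toReal := by rw [htdef, hLdef]
    _ ≤ 80*K^2/lam := hfin
    _ = 80*K^2 * lam ^ (-(1:ℝ)) := by
        rw [Real.rpow_neg_one, div_eq_mul_inv]
end
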